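/- arXiv:1302.5915 — 4 statements merged into one kernel-verified Lean document; each statement's English description precedes it below -/
import Mathlib

section
/- Two residually finite groups are abstractly commensurable if and only if they are commensurable up to finite kernels. -/
universe u

/-- A bundled group. -/
structure GroupObj : Type (u + 1) where
  carrier : Type u
  [grp : Group carrier]

attribute [instance] GroupObj.grp

/-- A group is residually finite if the intersection of all its finite-index
subgroups is trivial. -/
def ResiduallyFinite (Γ : Type u) [Group Γ] : Prop :=
  (⨅ (H : Subgroup Γ) (_ : H.FiniteIndex), H) = ⊥

/-- Two groups are abstractly commensurable if they contain isomorphic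
finite-index subgroups. -/
def AbstractlyCommensurable (G H : GroupObj.{u}) : Prop :=
  ∃ (A : Subgroup G.carrier) (B : Subgroup H.carrier),
    A.FiniteIndex ∧ B.FiniteIndex ∧ Nonempty (↥A ≃* ↥B)

/-- `G ∼ H` if there is a homomorphism `G → H` with finite kernel and
finite-index image. -/
def FinKerRel (G H : GroupObj.{u}) : Prop :=
  ∃ f : G.carrier →* H.carrier,
    (f.ker : Set G.carrier).Finite ∧ f.range.FiniteIndex

/-- Commensurability up to finite kernels: the equivalence relation generated
by `FinKerRel`. -/
def CommensurableUpToFiniteKernels (G H : GroupObj.{u}) : Prop :=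
  Relation.EqvGen FinKerRel G H

/-! ### Auxiliary lemmas -/

section Aux

variable {A B C : Type*} [Group A] [Group B] [Group C]

/-- The preimage of a finite-index subgroup is a finite-index subgroup. -/
theorem aux_comap_finiteIndex (f : A →* B) (K : Subgroup B) (hK : K.FiniteIndex) :
    (K.comap f).FiniteIndex := by
  constructor
  rw [Subgroup.index_comap]
  intro h
  apply hK.index_ne_zero
  have := Subgroup.relIndex_eq_zero_of_le_right (le_top (a := f.range)) h
  simpa using this

/-- The image of a finite-index subgroup under a homomorphism with finite-index
range has finite index. -/
theorem aux_map_finiteIndex (f : A →* B) (hf : f.range.FiniteIndex) (K : Subgroup A)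
    (hK : K.FiniteIndex) : (K.map f).FiniteIndex := by
  constructor
  rw [Subgroup.index_map]
  refine mul_ne_zero ?_ hf.index_ne_zero
  haveI := hK
  exact (Subgroup.finiteIndex_of_le (le_sup_left : K ≤ K ⊔ f.ker)).index_ne_zero

/-- Preimages of finite sets under homomorphisms with finite kernel are finite. -/
theorem aux_finite_preimage (f : A →* B) (hf : (f.ker : Set A).Finite)
    {S : Set B} (hS : S.Finite) : (f ⁻¹' S).Finite := by
  have : f ⁻¹' S ⊆ ⋃ b ∈ S, f ⁻¹' {b} := by
    intro x hx
    exact Set.mem_biUnion hx rfl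
  refine Set.Finite.subset (Set.Finite.biUnion hS fun b _ => ?_) this
  by_cases hb : ∃ a, f a = b
  · obtain ⟨a, ha⟩ := hb
    have hsub : f ⁻¹' {b} ⊆ (fun x => a * x) '' (f.ker : Set A) := by
      intro x hx
      refine ⟨a⁻¹ * x, ?_, by group⟩
      have hxb : f x = b := hx
      simp [MonoidHom.mem_ker, hxb, ← ha]
    exact Set.Finite.subset (hf.image _) hsub
  · have : f ⁻¹' {b} = ∅ := by
      ext x
      simp only [Set.mem_preimage, Set.mem_singleton_iff, Set.mem_empty_iff_false, iff_false]
      exact fun hx => hb ⟨x, hx⟩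
    simp [this]

/-- Composition of homomorphisms with finite kernel and finite-index range. -/
theorem aux_comp (f : A →* B) (g : B →* C)
    (hfk : (f.ker : Set A).Finite) (hfi : f.range.FiniteIndex)
    (hgk : (g.ker : Set B).Finite) (hgi : g.range.FiniteIndex) :
    ((g.comp f).ker : Set A).Finite ∧ (g.comp f).range.FiniteIndex := by
  constructor
  · have : (g.comp f).ker = g.ker.comap f := (MonoidHom.comap_ker g f).symm
    rw [this]
    exact aux_finite_preimage f hfk hgk
  · have : (g.comp f).range = f.range.map g := MonoidHom.range_comp g f
    rw [this]
    exact aux_map_finiteIndex g hgi f.range hfi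

end Aux

/-- `FinKerRel` is reflexive. -/
theorem finKerRel_refl (G : GroupObj.{u}) : FinKerRel G G := by
  refine ⟨MonoidHom.id _, ?_, ?_⟩
  · have : (MonoidHom.id G.carrier).ker = ⊥ := by
      ext x; simp [MonoidHom.mem_ker]
    rw [this]
    simp
  · have : (MonoidHom.id G.carrier).range = ⊤ :=
      MonoidHom.range_eq_top_of_surjective _ Function.surjective_id
    rw [this]
    infer_instance

/-- `FinKerRel` is transitive. -/
theorem finKerRel_trans {G H K : GroupObj.{u}} (h₁ : FinKerRel G H) (h₂ : FinKerRel H K) :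
    FinKerRel G K := by
  obtain ⟨f, hfk, hfi⟩ := h₁
  obtain ⟨g, hgk, hgi⟩ := h₂
  exact ⟨g.comp f, (aux_comp f g hfk hfi hgk hgi).1, (aux_comp f g hfk hfi hgk hgi).2⟩

/-- The span relation: a common "almost cover". -/
def SpanRel (G H : GroupObj.{u}) : Prop :=
  ∃ P : GroupObj.{u}, FinKerRel P G ∧ FinKerRel P H

theorem spanRel_refl (G : GroupObj.{u}) : SpanRel G G :=
  ⟨G, finKerRel_refl G, finKerRel_refl G⟩

theorem spanRel_symm {G H : GroupObj.{u}} (h : SpanRel G H) : SpanRel H G := by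
  obtain ⟨P, h₁, h₂⟩ := h
  exact ⟨P, h₂, h₁⟩

theorem spanRel_of_finKerRel {G H : GroupObj.{u}} (h : FinKerRel G H) : SpanRel G H :=
  ⟨G, finKerRel_refl G, h⟩

/-- Transitivity of the span relation, via fiber product. -/
theorem spanRel_trans {G H K : GroupObj.{u}} (h₁ : SpanRel G H) (h₂ : SpanRel H K) :
    SpanRel G K := by
  obtain ⟨P, hPG, p₂, hp₂k, hp₂i⟩ := h₁
  obtain ⟨P', ⟨q₁, hq₁k, hq₁i⟩, hPK⟩ := h₂
  -- the fiber product of `p₂ : P → H` and `q₁ : P' → H`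
  let D : Subgroup (P.carrier × P'.carrier) :=
    { carrier := {z | p₂ z.1 = q₁ z.2}
      mul_mem' := by
        intro a b ha hb
        simp only [Set.mem_setOf_eq, Prod.fst_mul, Prod.snd_mul, map_mul] at *
        rw [ha, hb]
      one_mem' := by simp
      inv_mem' := by
        intro a ha
        simp only [Set.mem_setOf_eq, Prod.fst_inv, Prod.snd_inv, map_inv] at *
        rw [ha] }
  have hmemD : ∀ z : P.carrier × P'.carrier, z ∈ D ↔ p₂ z.1 = q₁ z.2 := fun z => Iff.rfl
  let π : ↥D →* P.carrier := (MonoidHom.fst P.carrier P'.carrier).comp D.subtype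
  let π' : ↥D →* P'.carrier := (MonoidHom.snd P.carrier P'.carrier).comp D.subtype
  have hπ : ∀ z : ↥D, π z = (z : P.carrier × P'.carrier).1 := fun z => rfl
  have hπ' : ∀ z : ↥D, π' z = (z : P.carrier × P'.carrier).2 := fun z => rfl
  -- the kernel of π is finite
  have hπk : (π.ker : Set ↥D).Finite := by
    have himg : (fun z : ↥D => (z : P.carrier × P'.carrier).2) '' (π.ker : Set ↥D) ⊆
        (q₁.ker : Set P'.carrier) := by
      rintro y ⟨z, hz, rfl⟩
      have h1 : (z : P.carrier × P'.carrier).1 = 1 := hz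
      have h2 : p₂ (z : P.carrier × P'.carrier).1 = q₁ (z : P.carrier × P'.carrier).2 := z.2
      rw [h1, map_one] at h2
      exact (MonoidHom.mem_ker).mpr h2.symm
    have hinj : Set.InjOn (fun z : ↥D => (z : P.carrier × P'.carrier).2) (π.ker : Set ↥D) := by
      intro z hz w hw hzw
      have h1 : (z : P.carrier × P'.carrier).1 = 1 := hz
      have h2 : (w : P.carrier × P'.carrier).1 = 1 := hw
      ext
      · rw [h1, h2]
      · exact hzw
    exact Set.Finite.of_finite_image (Set.Finite.subset hq₁k himg) hinj
  -- the range of π is the preimage of the range of q₁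
  have hπr : π.range = q₁.range.comap p₂ := by
    ext x
    constructor
    · rintro ⟨z, rfl⟩
      exact ⟨(z : P.carrier × P'.carrier).2, z.2.symm⟩
    · rintro ⟨y, hy⟩
      exact ⟨⟨(x, y), hy.symm⟩, rfl⟩
  have hπi : π.range.FiniteIndex := by
    rw [hπr]
    exact aux_comap_finiteIndex p₂ q₁.range hq₁i
  -- similarly for π'
  have hπ'k : (π'.ker : Set ↥D).Finite := by
    have himg : (fun z : ↥D => (z : P.carrier × P'.carrier).1) '' (π'.ker : Set ↥D) ⊆
        (p₂.ker : Set P.carrier) := by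
      rintro y ⟨z, hz, rfl⟩
      have h1 : (z : P.carrier × P'.carrier).2 = 1 := hz
      have h2 : p₂ (z : P.carrier × P'.carrier).1 = q₁ (z : P.carrier × P'.carrier).2 := z.2
      rw [h1, map_one] at h2
      exact (MonoidHom.mem_ker).mpr h2
    have hinj : Set.InjOn (fun z : ↥D => (z : P.carrier × P'.carrier).1) (π'.ker : Set ↥D) := by
      intro z hz w hw hzw
      have h1 : (z : P.carrier × P'.carrier).2 = 1 := hz
      have h2 : (w : P.carrier × P'.carrier).2 = 1 := hw
      ext
      · exact hzw
      · rw [h1, h2]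
    exact Set.Finite.of_finite_image (Set.Finite.subset hp₂k himg) hinj
  have hπ'r : π'.range = p₂.range.comap q₁ := by
    ext x
    constructor
    · rintro ⟨z, rfl⟩
      exact ⟨(z : P.carrier × P'.carrier).1, z.2⟩
    · rintro ⟨y, hy⟩
      exact ⟨⟨(y, x), hy⟩, rfl⟩
  have hπ'i : π'.range.FiniteIndex := by
    rw [hπ'r]
    exact aux_comap_finiteIndex q₁ p₂.range hp₂i
  refine ⟨GroupObj.mk ↥D, ?_, ?_⟩
  · exact finKerRel_trans (G := GroupObj.mk ↥D) (H := P) ⟨π, hπk, hπi⟩ hPG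
  · exact finKerRel_trans (G := GroupObj.mk ↥D) (H := P') ⟨π', hπ'k, hπ'i⟩ hPK

/-- In a residually finite group, any element `≠ 1` avoids some finite-index
subgroup. -/
theorem exists_finiteIndex_not_mem {Γ : Type u} [Group Γ] (hΓ : ResiduallyFinite Γ)
    {x : Γ} (hx : x ≠ 1) : ∃ K : Subgroup Γ, K.FiniteIndex ∧ x ∉ K := by
  by_contra h
  push_neg at h
  have : x ∈ (⨅ (H : Subgroup Γ) (_ : H.FiniteIndex), H) := by
    simp only [Subgroup.mem_iInf]
    exact fun K hK => h K hK
  rw [hΓ] at this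
  exact hx (Subgroup.mem_bot.mp this)

/-- The key extraction: a span between residually finite groups gives abstract
commensurability. -/
theorem abstractlyCommensurable_of_spanRel {G H : GroupObj.{u}}
    (hG : ResiduallyFinite G.carrier) (hH : ResiduallyFinite H.carrier)
    (h : SpanRel G H) : AbstractlyCommensurable G H := by
  obtain ⟨P, ⟨f, hfk, hfi⟩, ⟨g, hgk, hgi⟩⟩ := h
  -- quotient by the intersection of the two kernels
  haveI : (f.ker ⊓ g.ker).Normal := Subgroup.normal_inf_normal f.ker g.ker
  set N : Subgroup P.carrier := f.ker ⊓ g.ker with hN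
  let Q := P.carrier ⧸ N
  let f' : Q →* G.carrier := QuotientGroup.lift N f (fun x hx => MonoidHom.mem_ker.mp hx.1)
  let g' : Q →* H.carrier := QuotientGroup.lift N g (fun x hx => MonoidHom.mem_ker.mp hx.2)
  have hf'mk : ∀ x : P.carrier, f' (QuotientGroup.mk x) = f x := fun x => rfl
  have hg'mk : ∀ x : P.carrier, g' (QuotientGroup.mk x) = g x := fun x => rfl
  have hmk_surj : Function.Surjective (QuotientGroup.mk (s := N)) :=
    QuotientGroup.mk_surjective
  -- kernels of the induced maps are finite
  have hf'ker : (f'.ker : Set Q) = QuotientGroup.mk '' (f.ker : Set P.carrier) := by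
    ext q
    constructor
    · intro hq
      obtain ⟨x, rfl⟩ := hmk_surj q
      exact ⟨x, MonoidHom.mem_ker.mpr hq, rfl⟩
    · rintro ⟨x, hx, rfl⟩
      show f' (QuotientGroup.mk x) = 1
      rw [hf'mk]
      exact MonoidHom.mem_ker.mp hx
  have hg'ker : (g'.ker : Set Q) = QuotientGroup.mk '' (g.ker : Set P.carrier) := by
    ext q
    constructor
    · intro hq
      obtain ⟨x, rfl⟩ := hmk_surj q
      exact ⟨x, MonoidHom.mem_ker.mpr hq, rfl⟩
    · rintro ⟨x, hx, rfl⟩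
      show g' (QuotientGroup.mk x) = 1
      rw [hg'mk]
      exact MonoidHom.mem_ker.mp hx
  have hf'k : (f'.ker : Set Q).Finite := by rw [hf'ker]; exact hfk.image _
  have hg'k : (g'.ker : Set Q).Finite := by rw [hg'ker]; exact hgk.image _
  -- ranges of the induced maps are the original ranges
  have hf'range : f'.range = f.range := by
    ext b
    constructor
    · rintro ⟨q, rfl⟩
      obtain ⟨x, rfl⟩ := hmk_surj q
      exact ⟨x, rfl⟩
    · rintro ⟨x, rfl⟩
      exact ⟨QuotientGroup.mk x, rfl⟩
  have hg'range : g'.range = g.range := by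
    ext b
    constructor
    · rintro ⟨q, rfl⟩
      obtain ⟨x, rfl⟩ := hmk_surj q
      exact ⟨x, rfl⟩
    · rintro ⟨x, rfl⟩
      exact ⟨QuotientGroup.mk x, rfl⟩
  have hf'i : f'.range.FiniteIndex := by rw [hf'range]; exact hfi
  have hg'i : g'.range.FiniteIndex := by rw [hg'range]; exact hgi
  -- the two kernels now intersect trivially
  have hkey : ∀ q : Q, f' q = 1 → g' q = 1 → q = 1 := by
    intro q h1 h2
    obtain ⟨x, rfl⟩ := hmk_surj q
    rw [hf'mk] at h1
    rw [hg'mk] at h2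
    exact (QuotientGroup.eq_one_iff x).mpr ⟨MonoidHom.mem_ker.mpr h1, MonoidHom.mem_ker.mpr h2⟩
  -- the finite set of "bad" elements
  set S : Set Q := ((f'.ker : Set Q) ∪ (g'.ker : Set Q)) \ {1} with hSdef
  have hSfin : S.Finite := Set.Finite.diff (hf'k.union hg'k)
  -- for each bad element, a finite-index subgroup avoiding it
  have hsep : ∀ s : S, ∃ K : Subgroup Q, K.FiniteIndex ∧ (s : Q) ∉ K := by
    rintro ⟨x, hx⟩
    obtain ⟨hxker, hx1⟩ := hx
    have hx1' : x ≠ 1 := by simpa using hx1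
    rcases hxker with hxf | hxg
    · -- x ∈ ker f', so g' x ≠ 1
      have hgx : g' x ≠ 1 := fun h => hx1' (hkey x hxf h)
      obtain ⟨B, hBi, hBx⟩ := exists_finiteIndex_not_mem hH hgx
      exact ⟨B.comap g', aux_comap_finiteIndex g' B hBi, fun h => hBx h⟩
    · -- x ∈ ker g', so f' x ≠ 1
      have hfx : f' x ≠ 1 := fun h => hx1' (hkey x h hxg)
      obtain ⟨B, hBi, hBx⟩ := exists_finiteIndex_not_mem hG hfx
      exact ⟨B.comap f', aux_comap_finiteIndex f' B hBi, fun h => hBx h⟩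
  choose k hk₁ hk₂ using hsep
  haveI : Finite ↥S := hSfin.to_subtype
  -- the finite-index subgroup avoiding all bad elements
  let P₀ : Subgroup Q := ⨅ s : S, k s
  have hP₀i : P₀.FiniteIndex := Subgroup.finiteIndex_iInf fun s => hk₁ s
  have hP₀le : ∀ s : S, P₀ ≤ k s := fun s => iInf_le _ s
  -- the restrictions of f' and g' to P₀ are injective
  have hinj : ∀ (φ : Q →* G.carrier) (_ : ∀ q : Q, φ q = 1 → q ∈ S ∪ {1}), True := fun _ _ =>
    trivial
  let φ : ↥P₀ →* G.carrier := f'.comp P₀.subtype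
  let ψ : ↥P₀ →* H.carrier := g'.comp P₀.subtype
  have hφinj : Function.Injective φ := by
    rw [← MonoidHom.ker_eq_bot_iff φ]
    ext z
    simp only [Subgroup.mem_bot]
    constructor
    · intro hz
      have hz' : f' (z : Q) = 1 := hz
      by_contra hne
      have hzne : (z : Q) ≠ 1 := fun h => hne (Subtype.ext h)
      have hzS : (z : Q) ∈ S := ⟨Or.inl (MonoidHom.mem_ker.mpr hz'), hzne⟩
      exact hk₂ ⟨(z : Q), hzS⟩ (hP₀le ⟨(z : Q), hzS⟩ z.2)
    · rintro rfl
      exact map_one φ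
  have hψinj : Function.Injective ψ := by
    rw [← MonoidHom.ker_eq_bot_iff ψ]
    ext z
    simp only [Subgroup.mem_bot]
    constructor
    · intro hz
      have hz' : g' (z : Q) = 1 := hz
      by_contra hne
      have hzne : (z : Q) ≠ 1 := fun h => hne (Subtype.ext h)
      have hzS : (z : Q) ∈ S := ⟨Or.inr (MonoidHom.mem_ker.mpr hz'), hzne⟩
      exact hk₂ ⟨(z : Q), hzS⟩ (hP₀le ⟨(z : Q), hzS⟩ z.2)
    · rintro rfl
      exact map_one ψ
  -- the ranges are finite-index subgroups
  have hφrange : φ.range = P₀.map f' := by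
    rw [MonoidHom.range_comp, Subgroup.range_subtype]
  have hψrange : ψ.range = P₀.map g' := by
    rw [MonoidHom.range_comp, Subgroup.range_subtype]
  have hφi : φ.range.FiniteIndex := by
    rw [hφrange]
    exact aux_map_finiteIndex f' hf'i P₀ hP₀i
  have hψi : ψ.range.FiniteIndex := by
    rw [hψrange]
    exact aux_map_finiteIndex g' hg'i P₀ hP₀i
  -- assemble the commensuration
  exact ⟨φ.range, ψ.range, hφi, hψi,
    ⟨(MonoidHom.ofInjective hφinj).symm.trans (MonoidHom.ofInjective hψinj)⟩⟩

/-- Two residually finite groups are abstractly commensurable if and only if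
they are commensurable up to finite kernels. -/
theorem abstractlyCommensurable_iff_commensurableUpToFiniteKernels
    (G H : GroupObj.{u})
    (hG : ResiduallyFinite G.carrier) (hH : ResiduallyFinite H.carrier) :
    AbstractlyCommensurable G H ↔ CommensurableUpToFiniteKernels G H := by
  constructor
  · rintro ⟨A, B, hA, hB, ⟨e⟩⟩
    -- G ← A ≃ B → H
    have r₁ : FinKerRel (GroupObj.mk ↥A) G := by
      refine ⟨A.subtype, ?_, ?_⟩
      · rw [Subgroup.ker_subtype]
        simp
      · rw [Subgroup.range_subtype]
        exact hA
    have r₂ : FinKerRel (GroupObj.mk ↥A) (GroupObj.mk ↥B) := by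
      refine ⟨e.toMonoidHom, ?_, ?_⟩
      · have : (e.toMonoidHom : ↥A →* ↥B).ker = ⊥ :=
          (MonoidHom.ker_eq_bot_iff _).mpr e.injective
        rw [this]
        simp
      · rw [MonoidHom.range_eq_top_of_surjective _ e.surjective]
        infer_instance
    have r₃ : FinKerRel (GroupObj.mk ↥B) H := by
      refine ⟨B.subtype, ?_, ?_⟩
      · rw [Subgroup.ker_subtype]
        simp
      · rw [Subgroup.range_subtype]
        exact hB
    exact Relation.EqvGen.trans _ _ _
      (Relation.EqvGen.trans _ _ _
        (Relation.EqvGen.symm _ _ (Relation.EqvGen.rel _ _ r₁))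
        (Relation.EqvGen.rel _ _ r₂))
      (Relation.EqvGen.rel _ _ r₃)
  · intro h
    refine abstractlyCommensurable_of_spanRel hG hH ?_
    clear hG hH
    induction h with
    | rel x y hxy => exact spanRel_of_finKerRel hxy
    | refl x => exact spanRel_refl x
    | symm x y _ ih => exact spanRel_symm ih
    | trans x y z _ _ ih₁ ih₂ => exact spanRel_trans ih₁ ih₂
end

section
/- Free groups have the unique root property: in a free group, x^k = y^k with k ≠ 0 implies x = y. -/
namespace FreeGroupUniqueRoot

open List FreeGroup

set_option linter.unusedSectionVars false

variable {α : Type*} [DecidableEq α]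

/-- Formal inverse of a letter. -/
def ip (p : α × Bool) : α × Bool := (p.1, !p.2)

@[simp] lemma ip_ip (p : α × Bool) : ip (ip p) = p := by simp [ip]

lemma ip_ne (p : α × Bool) : ip p ≠ p := by
  simp [ip, Prod.ext_iff]

/-- Two adjacent letters do not cancel. -/
def R (p q : α × Bool) : Prop := q ≠ ip p

/-- `L` is a reduced word. -/
def Red' (L : List (α × Bool)) : Prop := L.Chain' R

/-- `L` is a cyclically reduced word. -/
def CR (L : List (α × Bool)) : Prop := (L ++ L).Chain' R

lemma CR.red' {L : List (α × Bool)} (h : CR L) : Red' L :=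
  (List.isChain_append.1 h).1

lemma CR.junction {L : List (α × Bool)} (h : CR L) :
    ∀ x ∈ L.getLast?, ∀ y ∈ L.head?, R x y :=
  (List.isChain_append.1 h).2.2

lemma cr_of_red' {L : List (α × Bool)} (h : Red' L)
    (hj : ∀ x ∈ L.getLast?, ∀ y ∈ L.head?, R x y) : CR L :=
  List.isChain_append.2 ⟨h, h, hj⟩

lemma reduce_eq_self_of_red' {L : List (α × Bool)} (h : Red' L) : reduce L = L := by
  induction L with
  | nil => rfl
  | cons p L ih =>
    rw [reduce.cons, ih h.tail]
    cases L with
    | nil => rfl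
    | cons q M =>
      have hR : R p q := (List.isChain_cons_cons.1 h).1
      show (if p.1 = q.1 ∧ p.2 = !q.2 then M else p :: q :: M) = p :: q :: M
      rw [if_neg]
      rintro ⟨h1, h2⟩
      exact hR (Prod.ext (by simp [ip, h1.symm]) (by simp [ip, h2]))

lemma red'_reduce (L : List (α × Bool)) : Red' (reduce L) := by
  induction L with
  | nil => simp [Red', List.Chain', reduce]
  | cons p L ih =>
    rw [reduce.cons]
    cases hL : reduce L with
    | nil => simp [Red', List.Chain']
    | cons q M =>
      rw [hL] at ih
      show Red' (if p.1 = q.1 ∧ p.2 = !q.2 then M else p :: q :: M)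
      by_cases hpq : p.1 = q.1 ∧ p.2 = !q.2
      · rw [if_pos hpq]; exact ih.tail
      · rw [if_neg hpq]
        refine List.isChain_cons_cons.2 ⟨fun h => hpq ?_, ih⟩
        subst h
        exact ⟨rfl, by simp [ip]⟩

lemma red'_toWord (x : FreeGroup α) : Red' x.toWord := by
  rw [← FreeGroup.reduce_toWord]
  exact red'_reduce _

lemma toWord_mk_eq {L : List (α × Bool)} (h : Red' L) : (FreeGroup.mk L).toWord = L := by
  rw [FreeGroup.toWord_mk, reduce_eq_self_of_red' h]

lemma red'_invRev {L : List (α × Bool)} (h : Red' L) : Red' (invRev L) := by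
  unfold FreeGroup.invRev
  rw [Red', List.Chain', List.isChain_reverse, List.isChain_map]
  refine h.imp ?_
  intro a b hab
  show R (ip b) (ip a)
  intro heq
  simp only [ip_ip] at heq
  exact hab heq.symm

lemma invRev_head? (L : List (α × Bool)) : (invRev L).head? = L.getLast?.map ip := by
  unfold FreeGroup.invRev
  rw [List.head?_reverse, List.getLast?_map]
  rfl

lemma invRev_getLast? (L : List (α × Bool)) : (invRev L).getLast? = L.head?.map ip := by
  unfold FreeGroup.invRev
  rw [List.getLast?_reverse, List.head?_map]
  rfl

lemma flatten_replicate_succ (n : ℕ) (L : List (α × Bool)) :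
    (List.replicate (n + 1) L).flatten = L ++ (List.replicate n L).flatten := by
  rw [List.replicate_succ, List.flatten_cons]

lemma flatten_replicate_succ' (n : ℕ) (L : List (α × Bool)) :
    (List.replicate (n + 1) L).flatten = (List.replicate n L).flatten ++ L := by
  rw [List.replicate_succ', List.flatten_append]; simp

lemma head?_flatten_replicate {n : ℕ} (hn : 0 < n) (L : List (α × Bool)) (hL : L ≠ []) :
    ((List.replicate n L).flatten).head? = L.head? := by
  obtain ⟨m, rfl⟩ := Nat.exists_eq_add_of_lt hn
  rw [Nat.zero_add, flatten_replicate_succ, List.head?_append_of_ne_nil _ hL]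

lemma getLast?_flatten_replicate {n : ℕ} (hn : 0 < n) (L : List (α × Bool)) (hL : L ≠ []) :
    ((List.replicate n L).flatten).getLast? = L.getLast? := by
  obtain ⟨m, rfl⟩ := Nat.exists_eq_add_of_lt hn
  rw [Nat.zero_add, flatten_replicate_succ', List.getLast?_append_of_ne_nil _ hL]

lemma red'_flatten_replicate {L : List (α × Bool)} (h : CR L) (n : ℕ) :
    Red' ((List.replicate n L).flatten) := by
  induction n with
  | zero => simp [Red', List.Chain']
  | succ n ih =>
    rw [flatten_replicate_succ]
    refine List.isChain_append.2 ⟨h.red', ih, ?_⟩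
    intro x hx y hy
    rcases Nat.eq_zero_or_pos n with rfl | hn
    · simp at hy
    by_cases hL : L = []
    · subst hL; simp at hx
    rw [head?_flatten_replicate hn L hL] at hy
    exact h.junction x hx y hy

lemma cr_flatten_replicate {L : List (α × Bool)} (h : CR L) (n : ℕ) :
    CR ((List.replicate n L).flatten) := by
  have : (List.replicate n L).flatten ++ (List.replicate n L).flatten
      = (List.replicate (n + n) L).flatten := by
    rw [← List.flatten_append, ← List.replicate_add]
  rw [CR, this]
  exact red'_flatten_replicate h _

lemma toWord_pow {L : List (α × Bool)} (h : CR L) (n : ℕ) :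
    (FreeGroup.mk L ^ n).toWord = (List.replicate n L).flatten := by
  rw [FreeGroup.pow_mk, toWord_mk_eq (red'_flatten_replicate h n)]

/-- rotating head to tail preserves cyclic reducedness -/
lemma cr_rot_left {p : α × Bool} {M : List (α × Bool)} (h : CR (p :: M)) :
    CR (M ++ [p]) := by
  have h3 := red'_flatten_replicate h 3
  have : (List.replicate 3 (p :: M)).flatten
      = [p] ++ ((M ++ [p]) ++ (M ++ [p])) ++ M := by
    show (p :: M) ++ ((p :: M) ++ ((p :: M) ++ [])) = _
    simp
  rw [this] at h3
  exact h3.infix ⟨[p], M, rfl⟩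

/-- rotating tail to head preserves cyclic reducedness -/
lemma cr_rot_right {p : α × Bool} {M : List (α × Bool)} (h : CR (M ++ [p])) :
    CR (p :: M) := by
  have h3 := red'_flatten_replicate h 3
  have : (List.replicate 3 (M ++ [p])).flatten
      = M ++ ((p :: M) ++ (p :: M)) ++ [p] := by
    show (M ++ [p]) ++ ((M ++ [p]) ++ ((M ++ [p]) ++ [])) = _
    simp
  rw [this] at h3
  exact h3.infix ⟨M, [p], rfl⟩

lemma mk_single_inv (s : α × Bool) : (FreeGroup.mk [s])⁻¹ = FreeGroup.mk [ip s] := by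
  rw [FreeGroup.inv_mk]
  rfl

lemma mk_cancel_cons (s : α × Bool) (M : List (α × Bool)) :
    FreeGroup.mk (s :: ip s :: M) = FreeGroup.mk M := by
  have : FreeGroup.mk (s :: ip s :: M)
      = FreeGroup.mk [s] * FreeGroup.mk [ip s] * FreeGroup.mk M := by
    rw [FreeGroup.mul_mk, FreeGroup.mul_mk]; rfl
  rw [this, ← mk_single_inv, mul_inv_cancel, one_mul]

lemma mk_cancel_append (s : α × Bool) (M : List (α × Bool)) :
    FreeGroup.mk (M ++ [s, ip s]) = FreeGroup.mk M := by
  have : FreeGroup.mk (M ++ [s, ip s])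
      = FreeGroup.mk M * (FreeGroup.mk [s] * FreeGroup.mk [ip s]) := by
    rw [FreeGroup.mul_mk, FreeGroup.mul_mk]; rfl
  rw [this, ← mk_single_inv, mul_inv_cancel, mul_one]

lemma length_flatten_replicate (n : ℕ) (L : List (α × Bool)) :
    ((List.replicate n L).flatten).length = n * L.length := by
  induction n with
  | zero => simp
  | succ n ih => rw [flatten_replicate_succ]; simp [ih, Nat.succ_mul, Nat.add_comm]

/-- The key lemma: if `c, d` are cyclically reduced and `c ^ n` is conjugate to `d ^ n`
by `t`, then `c` is conjugate to `d` by the same `t`. -/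
lemma key {n : ℕ} (hn : 0 < n) : ∀ N (t c d : FreeGroup α),
    t.toWord.length ≤ N → CR c.toWord → CR d.toWord →
    c ^ n = t * d ^ n * t⁻¹ → c = t * d * t⁻¹ := by
  intro N
  induction N with
  | zero =>
    intro t c d hlen hc hd heq
    have ht : t = 1 := by
      rw [← FreeGroup.toWord_eq_nil_iff, ← List.length_eq_zero_iff]
      omega
    subst ht
    rw [one_mul, inv_one, mul_one] at heq ⊢
    -- c ^ n = d ^ n with both cyclically reduced
    have hcw : c = FreeGroup.mk c.toWord := (FreeGroup.mk_toWord).symm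
    have hdw : d = FreeGroup.mk d.toWord := (FreeGroup.mk_toWord).symm
    have h1 : (c ^ n).toWord = (List.replicate n c.toWord).flatten := by
      conv_lhs => rw [hcw]
      exact toWord_pow hc n
    have h2 : (d ^ n).toWord = (List.replicate n d.toWord).flatten := by
      conv_lhs => rw [hdw]
      exact toWord_pow hd n
    have hfl : (List.replicate n c.toWord).flatten = (List.replicate n d.toWord).flatten := by
      rw [← h1, ← h2, heq]
    have hlen2 : c.toWord.length = d.toWord.length := by
      have := congrArg List.length hfl
      rw [length_flatten_replicate, length_flatten_replicate] at this
      exact Nat.eq_of_mul_eq_mul_left hn this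
    obtain ⟨m, rfl⟩ := Nat.exists_eq_add_of_lt hn
    rw [Nat.zero_add, flatten_replicate_succ, flatten_replicate_succ] at hfl
    have : c.toWord = d.toWord := by
      have := congrArg (List.take c.toWord.length) hfl
      rwa [List.take_left, hlen2, List.take_left] at this
    exact FreeGroup.toWord_injective this
  | succ N ih =>
    intro t c d hlen hc hd heq
    rcases eq_or_ne t.toWord [] with ht | ht
    · exact ih t c d (by rw [ht]; simp) hc hd heq
    -- t = mk T' * σ with σ a single letter
    obtain ⟨T', s, hT⟩ := List.eq_nil_or_concat t.toWord |>.resolve_left ht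
    rw [List.concat_eq_append] at hT
    have hredT : Red' t.toWord := red'_toWord t
    have hredT' : Red' T' := by
      rw [hT] at hredT
      exact hredT.prefix ⟨[s], rfl⟩
    have htfact : t = FreeGroup.mk T' * FreeGroup.mk [s] := by
      rw [FreeGroup.mul_mk, ← hT, FreeGroup.mk_toWord]
    have hT'word : (FreeGroup.mk T').toWord = T' := toWord_mk_eq hredT'
    have hT'len : (FreeGroup.mk T').toWord.length ≤ N := by
      rw [hT'word]
      have := congrArg List.length hT
      simp at this
      omega
    set σ := FreeGroup.mk [s] with hσ
    rcases eq_or_ne d.toWord [] with hD | hD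
    · -- d = 1
      have hd1 : d = 1 := FreeGroup.toWord_eq_nil_iff.1 hD
      subst hd1
      rw [one_pow, mul_one, mul_inv_cancel] at heq
      have hcw : (c ^ n).toWord = (List.replicate n c.toWord).flatten := by
        conv_lhs => rw [← FreeGroup.mk_toWord (x := c)]
        exact toWord_pow hc n
      rw [heq] at hcw
      have : c.toWord = [] := by
        obtain ⟨m, rfl⟩ := Nat.exists_eq_add_of_lt hn
        rw [Nat.zero_add, flatten_replicate_succ] at hcw
        have := congrArg List.length hcw
        simp [FreeGroup.toWord_one] at this
        rw [← List.length_eq_zero_iff]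
        omega
      have hc1 : c = 1 := FreeGroup.toWord_eq_nil_iff.1 this
      rw [hc1, mul_one, mul_inv_cancel]
    · -- d ≠ 1
      by_cases hb : d.toWord.head? = some (ip s)
      · -- rotate: d₂ = σ * d * σ⁻¹, word is tail ++ [ip s]
        obtain ⟨q, M, hqM⟩ := List.exists_cons_of_ne_nil hD
        have hq : q = ip s := by
          rw [hqM] at hb; simpa using hb
        rw [hq] at hqM
        have hd2 : σ * d * σ⁻¹ = FreeGroup.mk (M ++ [ip s]) := by
          rw [hσ, mk_single_inv, ← FreeGroup.mk_toWord (x := d), hqM,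
            FreeGroup.mul_mk, FreeGroup.mul_mk]
          show FreeGroup.mk (s :: ip s :: (M ++ [ip s])) = _
          rw [mk_cancel_cons]
        have hcrrot : CR (M ++ [ip s]) := by
          apply cr_rot_left
          rw [← hqM]; exact hd
        have hd2w : (σ * d * σ⁻¹).toWord = M ++ [ip s] := by
          rw [hd2, toWord_mk_eq hcrrot.red']
        have hd2cr : CR (σ * d * σ⁻¹).toWord := by rw [hd2w]; exact hcrrot
        have heq2 : c ^ n = FreeGroup.mk T' * (σ * d * σ⁻¹) ^ n * (FreeGroup.mk T')⁻¹ := by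
          rw [conj_pow, heq, htfact]
          group
        have := ih (FreeGroup.mk T') c (σ * d * σ⁻¹) hT'len hc hd2cr heq2
        rw [this, htfact]
        group
      · by_cases hcc : d.toWord.getLast? = some s
        · -- rotate the other way: d₂ = σ * d * σ⁻¹ = mk (s :: dropLast)
          obtain ⟨M, r, hMr⟩ := List.eq_nil_or_concat d.toWord |>.resolve_left hD
          rw [List.concat_eq_append] at hMr
          have hr : r = s := by
            rw [hMr, List.getLast?_concat] at hcc; simpa using hcc
          rw [hr] at hMr
          have hd2 : σ * d * σ⁻¹ = FreeGroup.mk (s :: M) := by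
            rw [hσ, mk_single_inv, ← FreeGroup.mk_toWord (x := d), hMr,
              FreeGroup.mul_mk, FreeGroup.mul_mk]
            show FreeGroup.mk (s :: ((M ++ [s]) ++ [ip s])) = _
            rw [List.append_assoc]
            show FreeGroup.mk (s :: (M ++ [s, ip s])) = _
            rw [show (s :: (M ++ [s, ip s])) = (s :: M) ++ [s, ip s] by simp,
              mk_cancel_append]
          have hcrrot : CR (s :: M) := by
            apply cr_rot_right
            rw [← hMr]; exact hd
          have hd2w : (σ * d * σ⁻¹).toWord = s :: M := by
            rw [hd2, toWord_mk_eq hcrrot.red']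
          have hd2cr : CR (σ * d * σ⁻¹).toWord := by rw [hd2w]; exact hcrrot
          have heq2 : c ^ n = FreeGroup.mk T' * (σ * d * σ⁻¹) ^ n * (FreeGroup.mk T')⁻¹ := by
            rw [conj_pow, heq, htfact]
            group
          have := ih (FreeGroup.mk T') c (σ * d * σ⁻¹) hT'len hc hd2cr heq2
          rw [this, htfact]
          group
        · -- no cancellation: contradiction with c cyclically reduced
          exfalso
          set T := t.toWord with hTdef
          set D := d.toWord with hDdef
          set F := (List.replicate n D).flatten with hF
          have hFne : F ≠ [] := by
            rw [hF, ← List.length_pos_iff, length_flatten_replicate]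
            have := List.length_pos_iff.2 hD
            positivity
          have hFhead : F.head? = D.head? := head?_flatten_replicate hn D hD
          have hFlast : F.getLast? = D.getLast? := getLast?_flatten_replicate hn D hD
          have hW : Red' (T ++ (F ++ invRev T)) := by
            refine List.isChain_append.2 ⟨hredT, List.isChain_append.2
              ⟨red'_flatten_replicate hd n, red'_invRev hredT, ?_⟩, ?_⟩
            · -- junction F → invRev T
              intro x hx y hy
              rw [hFlast] at hx
              rw [invRev_head?, hT] at hy
              simp only [List.getLast?_concat, Option.map_some] at hy
              have hy' : y = ip s := by simpa using hy.symm
              subst hy'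
              intro hcontr
              exact hcc (by rw [hx]; congr 1; have := congrArg ip hcontr; simpa using this.symm)
            · -- junction T → F ++ invRev T
              intro x hx y hy
              rw [hT, List.getLast?_concat] at hx
              have hx' : x = s := by simpa using hx.symm
              subst hx'
              rw [List.head?_append_of_ne_nil _ hFne, hFhead] at hy
              intro hcontr
              exact hb (by rw [hy, hcontr])
          have h1 : t = FreeGroup.mk T := FreeGroup.mk_toWord.symm
          have h2 : d ^ n = FreeGroup.mk F := by
            rw [show d = FreeGroup.mk D from FreeGroup.mk_toWord.symm, FreeGroup.pow_mk]
          have h3 : t⁻¹ = FreeGroup.mk (invRev T) := by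
            rw [h1, FreeGroup.inv_mk]
          have hcnw : (c ^ n).toWord = T ++ (F ++ invRev T) := by
            have : c ^ n = FreeGroup.mk (T ++ (F ++ invRev T)) := by
              rw [heq, h2, h3]
              conv_lhs => rw [h1]
              rw [FreeGroup.mul_mk, FreeGroup.mul_mk, List.append_assoc]
            rw [this, toWord_mk_eq hW]
          have hcnw2 : (c ^ n).toWord = (List.replicate n c.toWord).flatten := by
            conv_lhs => rw [← FreeGroup.mk_toWord (x := c)]
            exact toWord_pow hc n
          set C := c.toWord with hCdef
          have hCne : C ≠ [] := by
            intro hCnil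
            rw [hCnil] at hcnw2
            rw [hcnw2] at hcnw
            simp only [List.flatten_replicate_nil] at hcnw
            exact ht (List.append_eq_nil_iff.1 hcnw.symm).1
          have hTne : T ≠ [] := ht
          -- head and last of C
          have hhead : C.head? = T.head? := by
            rw [← head?_flatten_replicate hn C hCne, ← hcnw2, hcnw,
              List.head?_append_of_ne_nil _ hTne]
          have hinvTne : invRev T ≠ [] := by
            rw [← List.length_pos_iff, FreeGroup.invRev_length, List.length_pos_iff]; exact hTne
          have hlast : C.getLast? = (invRev T).getLast? := by
            rw [← getLast?_flatten_replicate hn C hCne, ← hcnw2, hcnw,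
              List.getLast?_append_of_ne_nil _ (by simp [hinvTne]),
              List.getLast?_append_of_ne_nil _ hinvTne]
          rw [invRev_getLast?] at hlast
          obtain ⟨p, Crest, hC⟩ := List.exists_cons_of_ne_nil hCne
          have hpT : T.head? = some p := by rw [← hhead, hC]; rfl
          have hClast : C.getLast? = some (ip p) := by
            rw [hlast, hpT]; rfl
          have := hc.junction (ip p) (Option.mem_def.2 hClast) p
            (Option.mem_def.2 (by rw [hC]; rfl))
          exact this (by simp)

/-- Cyclic reduction: every element is a conjugate of a cyclically reduced element. -/
lemma decomp : ∀ N (x : FreeGroup α), x.toWord.length ≤ N →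
    ∃ g c : FreeGroup α, CR c.toWord ∧ x = g * c * g⁻¹ := by
  intro N
  induction N with
  | zero =>
    intro x hx
    refine ⟨1, x, ?_, by group⟩
    have : x.toWord = [] := by rw [← List.length_eq_zero_iff]; omega
    rw [this]
    simp [CR, List.Chain']
  | succ N ih =>
    intro x hx
    by_cases hcr : CR x.toWord
    · exact ⟨1, x, hcr, by group⟩
    have hred : Red' x.toWord := red'_toWord x
    set C := x.toWord with hC
    have hCne : C ≠ [] := by
      intro h
      apply hcr
      rw [h]
      simp [CR, List.Chain']
    obtain ⟨p, M, hpM⟩ := List.exists_cons_of_ne_nil hCne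
    have hjunction : ¬ (∀ z ∈ C.getLast?, ∀ y ∈ C.head?, R z y) := fun hj =>
      hcr (cr_of_red' hred hj)
    push_neg at hjunction
    obtain ⟨q, hq, p', hp', hRqp⟩ := hjunction
    rw [R, not_not] at hRqp
    have hp'p : p' = p := by rw [hpM] at hp'; simpa using hp'.symm
    have hqval : q = ip p := by rw [← hp'p, hRqp, ip_ip]
    have hqmem : C.getLast? = some (ip p) := by rw [← hqval]; exact hq
    have hMne : M ≠ [] := by
      rintro rfl
      rw [hpM] at hqmem
      simp at hqmem
      exact ip_ne p hqmem.symm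
    obtain ⟨M', r, hM'⟩ := List.eq_nil_or_concat M |>.resolve_left hMne
    rw [List.concat_eq_append] at hM'
    have hr : r = ip p := by
      rw [hpM, hM'] at hqmem
      rw [show p :: (M' ++ [r]) = (p :: M') ++ [r] by simp, List.getLast?_concat] at hqmem
      simpa using hqmem
    rw [hr] at hM'
    have hxf : x = FreeGroup.mk [p] * FreeGroup.mk M' * (FreeGroup.mk [p])⁻¹ := by
      rw [mk_single_inv, FreeGroup.mul_mk, FreeGroup.mul_mk,
        ← FreeGroup.mk_toWord (x := x), ← hC, hpM, hM']
      simp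
    have hredM' : Red' M' := by
      rw [hpM, hM'] at hred
      exact (hred.tail).prefix ⟨[ip p], rfl⟩
    have hM'len : (FreeGroup.mk M').toWord.length ≤ N := by
      rw [toWord_mk_eq hredM']
      have := congrArg List.length hpM
      rw [hM'] at this
      simp at this
      omega
    obtain ⟨g, c, hcrc, hgc⟩ := ih (FreeGroup.mk M') hM'len
    refine ⟨FreeGroup.mk [p] * g, c, hcrc, ?_⟩
    rw [hxf, hgc]
    group

end FreeGroupUniqueRoot

/-- Free groups have the unique root property: `x^k = y^k` with `k ≠ 0`
implies `x = y`. -/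
theorem freeGroup_unique_root (α : Type*) (x y : FreeGroup α) (k : ℤ)
    (hk : k ≠ 0) (h : x ^ k = y ^ k) : x = y := by
  classical
  open FreeGroupUniqueRoot in
  obtain ⟨n, hn, h⟩ : ∃ n : ℕ, 0 < n ∧ x ^ n = y ^ n := by
    rcases hk.lt_or_gt with hk | hk
    · refine ⟨(-k).toNat, by omega, ?_⟩
      have h' : x ^ (-k) = y ^ (-k) := by rw [zpow_neg, zpow_neg, h]
      rw [← zpow_natCast, ← zpow_natCast, Int.toNat_of_nonneg (by omega)]
      exact h'
    · refine ⟨k.toNat, by omega, ?_⟩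
      rw [← zpow_natCast, ← zpow_natCast, Int.toNat_of_nonneg (by omega)]
      exact h
  obtain ⟨g, c, hc, rfl⟩ := FreeGroupUniqueRoot.decomp x.toWord.length x le_rfl
  obtain ⟨g', d, hd, rfl⟩ := FreeGroupUniqueRoot.decomp y.toWord.length y le_rfl
  have heq : c ^ n = (g⁻¹ * g') * d ^ n * (g⁻¹ * g')⁻¹ := by
    rw [conj_pow, conj_pow] at h
    calc c ^ n = g⁻¹ * (g * c ^ n * g⁻¹) * g := by group
    _ = g⁻¹ * (g' * d ^ n * g'⁻¹) * g := by rw [h]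
    _ = (g⁻¹ * g') * d ^ n * (g⁻¹ * g')⁻¹ := by group
  have := FreeGroupUniqueRoot.key hn (g⁻¹ * g').toWord.length (g⁻¹ * g') c d le_rfl hc hd heq
  rw [this]
  group
end

section
/- Let Γ be a strongly polycyclic group and Γ₁ ≤ Γ a finite-index subgroup. Then Fitt(Γ₁) = Fitt(Γ) ∩ Γ₁. -/
/-- A subnormal series of `Γ` of length `n` with all successive quotients cyclic. -/
structure PolycyclicSeries (Γ : Type*) [Group Γ] (n : ℕ) where
  s : Fin (n + 1) → Subgroup Γ
  bot : s 0 = ⊥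
  top : s (Fin.last n) = ⊤
  normal : ∀ i : Fin n, ((s i.castSucc).subgroupOf (s i.succ)).Normal
  cyclic : ∀ i : Fin n,
    letI := normal i
    IsCyclic (↥(s i.succ) ⧸ (s i.castSucc).subgroupOf (s i.succ))

/-- A group is polycyclic if it admits a subnormal series with cyclic
successive quotients. -/
def IsPolycyclic (Γ : Type*) [Group Γ] : Prop :=
  ∃ n : ℕ, Nonempty (PolycyclicSeries Γ n)

/-- A group is strongly polycyclic if it admits a subnormal series with all
successive quotients infinite cyclic. -/
def IsStronglyPolycyclic (Γ : Type*) [Group Γ] : Prop :=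
  ∃ (n : ℕ) (S : PolycyclicSeries Γ n), ∀ i : Fin n,
    Infinite (↥(S.s i.succ) ⧸ (S.s i.castSucc).subgroupOf (S.s i.succ))

/-- The number of infinite cyclic successive quotients of a polycyclic series. -/
noncomputable def PolycyclicSeries.hirsch {Γ : Type*} [Group Γ] {n : ℕ}
    (S : PolycyclicSeries Γ n) : ℕ :=
  Nat.card {i : Fin n //
    Infinite (↥(S.s i.succ) ⧸ (S.s i.castSucc).subgroupOf (S.s i.succ))}

/-- The Fitting subgroup: the subgroup generated by all normal nilpotent
subgroups. -/
def Fitting (Γ : Type*) [Group Γ] : Subgroup Γ :=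
  ⨆ (N : Subgroup Γ) (_ : N.Normal ∧ Group.IsNilpotent ↥N), N

open Subgroup
open scoped commutatorElement

namespace PolyFitAux

variable {Γ : Type*} [Group Γ]

lemma comm_mem_left {P : Subgroup Γ} (hP : P.Normal) {p : Γ} (hp : p ∈ P) (g : Γ) :
    ⁅p, g⁆ ∈ P := by
  have h : p * (g * p⁻¹ * g⁻¹) ∈ P := P.mul_mem hp (hP.conj_mem _ (P.inv_mem hp) g)
  have e : ⁅p, g⁆ = p * (g * p⁻¹ * g⁻¹) := by group
  rw [e]; exact h

lemma comm_mem_right {P : Subgroup Γ} (hP : P.Normal) {p : Γ} (hp : p ∈ P) (g : Γ) :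
    ⁅g, p⁆ ∈ P := by
  have h := P.inv_mem (comm_mem_left hP hp g)
  rwa [commutatorElement_inv] at h

lemma normal_iSup {ι : Sort*} {f : ι → Subgroup Γ} (hf : ∀ i, (f i).Normal) :
    (⨆ i, f i).Normal := by
  constructor
  intro x hx g
  refine Subgroup.iSup_induction f (C := fun y => g * y * g⁻¹ ∈ ⨆ i, f i) hx
    (fun i y hy => le_iSup f i ((hf i).conj_mem _ hy g)) (by simpa using one_mem (⨆ i, f i)) ?_
  intro a b ha hb
  have : g * (a * b) * g⁻¹ = (g * a * g⁻¹) * (g * b * g⁻¹) := by group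
  rw [this]; exact mul_mem ha hb

lemma normal_inf {H K : Subgroup Γ} (hH : H.Normal) (hK : K.Normal) : (H ⊓ K).Normal :=
  ⟨fun x hx g => ⟨hH.conj_mem _ hx.1 g, hK.conj_mem _ hx.2 g⟩⟩

lemma comm_sup_le {H K L M : Subgroup Γ} (hM : M.Normal)
    (h1 : ⁅H, L⁆ ≤ M) (h2 : ⁅K, L⁆ ≤ M) : ⁅H ⊔ K, L⁆ ≤ M := by
  rw [commutator_le] at *
  intro g hg l hl
  have hg' : g ∈ closure ((H : Set Γ) ∪ (K : Set Γ)) := by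
    rwa [Subgroup.closure_union, Subgroup.closure_eq, Subgroup.closure_eq]
  revert l
  refine Subgroup.closure_induction (fun x hx => ?_) (fun l hl => by simpa using M.one_mem)
    (fun x y hx hy px py l hl => ?_) (fun x hx px l hl => ?_) hg'
  · rcases hx with hx | hx
    · exact fun l hl => h1 x hx l hl
    · exact fun l hl => h2 x hx l hl
  · have e : ⁅x * y, l⁆ = x * ⁅y, l⁆ * x⁻¹ * ⁅x, l⁆ := by group
    rw [e]
    exact M.mul_mem (hM.conj_mem _ (py l hl) x) (px l hl)
  · have e : ⁅x⁻¹, l⁆ = x⁻¹ * ⁅x, l⁆⁻¹ * x := by group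
    rw [e]
    have := hM.conj_mem _ (M.inv_mem (px l hl)) x⁻¹
    simpa using this

/-- `gam H i` is the image in the ambient group of the lower central series of `H`. -/
def gam (H : Subgroup Γ) (i : ℕ) : Subgroup Γ := map H.subtype (Subgroup.lowerCentralSeries (⊤ : Subgroup ↥H) i)

lemma gam_zero (H : Subgroup Γ) : gam H 0 = H := by
  simp only [gam, Subgroup.lowerCentralSeries_zero]
  rw [← MonoidHom.range_eq_map, range_subtype]

lemma gam_succ (H : Subgroup Γ) (i : ℕ) : gam H (i + 1) = ⁅gam H i, H⁆ := by
  have h1 : Subgroup.lowerCentralSeries (⊤ : Subgroup ↥H) (i + 1) = ⁅Subgroup.lowerCentralSeries (⊤ : Subgroup ↥H) i, ⊤⁆ := rfl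
  rw [gam, h1, Subgroup.map_commutator]
  congr 1
  rw [← MonoidHom.range_eq_map, range_subtype]

lemma gam_le (H : Subgroup Γ) (i : ℕ) : gam H i ≤ H := map_subtype_le _

lemma gam_antitone (H : Subgroup Γ) : Antitone (gam H) :=
  fun _ _ h => map_mono (Subgroup.lowerCentralSeries_antitone (S := ⊤) h)

lemma gam_normal {H : Subgroup Γ} (hH : H.Normal) : ∀ i, (gam H i).Normal := by
  intro i
  induction i with
  | zero => rw [gam_zero]; exact hH
  | succ n ih => rw [gam_succ]; exact @Subgroup.commutator_normal _ _ _ _ ih hH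

lemma exists_gam_bot {H : Subgroup Γ} (h : Group.IsNilpotent ↥H) : ∃ c, gam H c = ⊥ := by
  obtain ⟨c, hc⟩ := Subgroup.nilpotent_iff_lowerCentralSeries.mp h
  exact ⟨c, by rw [gam, hc, Subgroup.map_bot]⟩


/-- Fitting's theorem: the join of two normal nilpotent subgroups is nilpotent. -/
theorem fitting_sup (H K : Subgroup Γ) (hH : H.Normal) (hK : K.Normal)
    (hHn : Group.IsNilpotent ↥H) (hKn : Group.IsNilpotent ↥K) :
    Group.IsNilpotent ↥(H ⊔ K) := by
  obtain ⟨a, ha⟩ := exists_gam_bot hHn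
  obtain ⟨b, hb⟩ := exists_gam_bot hKn
  -- shifted chains with ⊤ at 0
  set gH : ℕ → Subgroup Γ := fun i => if i = 0 then ⊤ else gam H (i - 1) with hgH
  set gK : ℕ → Subgroup Γ := fun i => if i = 0 then ⊤ else gam K (i - 1) with hgK
  have gH_normal : ∀ i, (gH i).Normal := by
    intro i
    by_cases h : i = 0
    · have : gH i = ⊤ := by simp [hgH, h]
      rw [this]; infer_instance
    · have : gH i = gam H (i - 1) := by simp [hgH, h]
      rw [this]; exact gam_normal hH _
  have gK_normal : ∀ i, (gK i).Normal := by
    intro i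
    by_cases h : i = 0
    · have : gK i = ⊤ := by simp [hgK, h]
      rw [this]; infer_instance
    · have : gK i = gam K (i - 1) := by simp [hgK, h]
      rw [this]; exact gam_normal hK _
  have gH_step : ∀ i, ⁅gH i, H⁆ ≤ gH (i + 1) := by
    intro i
    by_cases h : i = 0
    · subst h
      have : gH 1 = H := by simp [hgH, gam_zero]
      rw [this]
      exact @Subgroup.commutator_le_right _ _ _ _ hH
    · have h1 : gH i = gam H (i - 1) := by simp [hgH, h]
      have h2 : gH (i + 1) = gam H i := by simp [hgH]
      rw [h1, h2]
      have heq : (i - 1) + 1 = i := Nat.succ_pred_eq_of_pos (Nat.pos_of_ne_zero h)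
      exact le_of_eq ((gam_succ H (i-1)).symm.trans (congrArg (gam H) heq))
  have gK_step : ∀ i, ⁅gK i, K⁆ ≤ gK (i + 1) := by
    intro i
    by_cases h : i = 0
    · subst h
      have : gK 1 = K := by simp [hgK, gam_zero]
      rw [this]
      exact @Subgroup.commutator_le_right _ _ _ _ hK
    · have h1 : gK i = gam K (i - 1) := by simp [hgK, h]
      have h2 : gK (i + 1) = gam K i := by simp [hgK]
      rw [h1, h2]
      have heq : (i - 1) + 1 = i := Nat.succ_pred_eq_of_pos (Nat.pos_of_ne_zero h)
      exact le_of_eq ((gam_succ K (i-1)).symm.trans (congrArg (gam K) heq))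
  have gH_bot : ∀ i, a + 1 ≤ i → gH i = ⊥ := by
    intro i hi
    have h0 : i ≠ 0 := by omega
    have : gam H (i - 1) ≤ gam H a := gam_antitone H (by omega)
    simp only [hgH, if_neg h0]
    exact le_bot_iff.mp (ha ▸ this)
  have gK_bot : ∀ i, b + 1 ≤ i → gK i = ⊥ := by
    intro i hi
    have h0 : i ≠ 0 := by omega
    have : gam K (i - 1) ≤ gam K b := gam_antitone K (by omega)
    simp only [hgK, if_neg h0]
    exact le_bot_iff.mp (hb ▸ this)
  -- the double-indexed chain
  set C : ℕ → Subgroup Γ := fun m => ⨆ p : { q : ℕ × ℕ // q.1 + q.2 = m }, gH p.1.1 ⊓ gK p.1.2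
    with hC
  have C_normal : ∀ m, (C m).Normal :=
    fun m => normal_iSup (fun p => normal_inf (gH_normal _) (gK_normal _))
  have C_zero : C 0 = ⊤ := by
    apply le_antisymm le_top
    have : gH 0 ⊓ gK 0 ≤ C 0 := le_iSup (fun p : { q : ℕ × ℕ // q.1 + q.2 = 0 } =>
      gH p.1.1 ⊓ gK p.1.2) ⟨(0, 0), rfl⟩
    simpa [hgH, hgK] using this
  have C_commH : ∀ m, ⁅C m, H⁆ ≤ C (m + 1) := by
    intro m
    rw [commutator_le]
    intro g hg l hl
    refine Subgroup.iSup_induction _ (C := fun y => ⁅y, l⁆ ∈ C (m + 1)) hg ?_ ?_ ?_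
    · rintro ⟨⟨i, j⟩, hij⟩ x hx
      have h1 : ⁅x, l⁆ ∈ gH (i + 1) := commutator_le.mp (gH_step i) x hx.1 l hl
      have h2 : ⁅x, l⁆ ∈ gK j := comm_mem_left (gK_normal j) hx.2 l
      exact le_iSup (fun p : { q : ℕ × ℕ // q.1 + q.2 = m + 1 } => gH p.1.1 ⊓ gK p.1.2)
        ⟨(i + 1, j), by omega⟩ ⟨h1, h2⟩
    · simpa using (C (m + 1)).one_mem
    · intro x y hx hy
      have e : ⁅x * y, l⁆ = x * ⁅y, l⁆ * x⁻¹ * ⁅x, l⁆ := by group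
      rw [e]
      exact mul_mem ((C_normal (m + 1)).conj_mem _ hy x) hx
  have C_commK : ∀ m, ⁅C m, K⁆ ≤ C (m + 1) := by
    intro m
    rw [commutator_le]
    intro g hg l hl
    refine Subgroup.iSup_induction _ (C := fun y => ⁅y, l⁆ ∈ C (m + 1)) hg ?_ ?_ ?_
    · rintro ⟨⟨i, j⟩, hij⟩ x hx
      have h1 : ⁅x, l⁆ ∈ gK (j + 1) := commutator_le.mp (gK_step j) x hx.2 l hl
      have h2 : ⁅x, l⁆ ∈ gH i := comm_mem_left (gH_normal i) hx.1 l
      exact le_iSup (fun p : { q : ℕ × ℕ // q.1 + q.2 = m + 1 } => gH p.1.1 ⊓ gK p.1.2)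
        ⟨(i, j + 1), by omega⟩ ⟨h2, h1⟩
    · simpa using (C (m + 1)).one_mem
    · intro x y hx hy
      have e : ⁅x * y, l⁆ = x * ⁅y, l⁆ * x⁻¹ * ⁅x, l⁆ := by group
      rw [e]
      exact mul_mem ((C_normal (m + 1)).conj_mem _ hy x) hx
  have C_step : ∀ m, ⁅C m, H ⊔ K⁆ ≤ C (m + 1) := by
    intro m
    rw [Subgroup.commutator_comm]
    exact comm_sup_le (C_normal (m + 1))
      (Subgroup.commutator_comm H (C m) ▸ C_commH m)
      (Subgroup.commutator_comm K (C m) ▸ C_commK m)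
  have C_bot : C (a + b + 2) = ⊥ := by
    apply le_bot_iff.mp
    apply iSup_le
    rintro ⟨⟨i, j⟩, hij⟩
    rcases Nat.le_or_le (a + 1) i with h | h
    · exact le_trans inf_le_left (le_of_eq (gH_bot i h))
    · have : b + 1 ≤ j := by omega
      exact le_trans inf_le_right (le_of_eq (gK_bot j this))
  -- descending central series of H ⊔ K
  rw [Subgroup.nilpotent_iff_finite_descending_central_series]
  refine ⟨a + b + 2, fun m => (C m).subgroupOf (H ⊔ K), ⟨?_, ?_⟩, ?_⟩
  · show (C 0).subgroupOf (H ⊔ K) = ⊤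
    rw [C_zero]; exact top_subgroupOf _
  · intro x n hx g
    have hmem : (↑x : Γ) ∈ C n := hx
    have hg : (↑g : Γ) ∈ H ⊔ K := g.2
    have : ⁅(↑x : Γ), (↑g : Γ)⁆ ∈ C (n + 1) :=
      commutator_le.mp (C_step n) _ hmem _ hg
    show ((x * g * x⁻¹ * g⁻¹ : ↥(H ⊔ K)) : Γ) ∈ C (n + 1)
    push_cast
    exact this
  · show (C (a + b + 2)).subgroupOf (H ⊔ K) = ⊥
    rw [C_bot]; exact bot_subgroupOf _


/-- elements with a positive power in `N`, when the whole group is abelian mod `N`. -/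
def isoQ {G : Type*} [Group G] (N : Subgroup G) (hN : N.Normal)
    (hab : ∀ x y : G, ⁅x, y⁆ ∈ N) : Subgroup G where
  carrier := {x | ∃ m : ℕ, 0 < m ∧ x ^ m ∈ N}
  one_mem' := ⟨1, Nat.one_pos, by simpa using N.one_mem⟩
  inv_mem' := by
    rintro x ⟨m, hm, hxm⟩
    exact ⟨m, hm, by rw [inv_pow]; exact N.inv_mem hxm⟩
  mul_mem' := by
    rintro x y ⟨m, hm, hxm⟩ ⟨l, hl, hyl⟩
    refine ⟨m * l, Nat.mul_pos hm hl, ?_⟩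
    haveI := hN
    have hc : Commute ((QuotientGroup.mk' N) x) ((QuotientGroup.mk' N) y) := by
      rw [← commutatorElement_eq_one_iff_commute, ← map_commutatorElement]
      exact (QuotientGroup.eq_one_iff _).mpr (hab x y)
    have hx1 : (QuotientGroup.mk' N) x ^ m = 1 := by
      rw [← map_pow]; exact (QuotientGroup.eq_one_iff _).mpr hxm
    have hy1 : (QuotientGroup.mk' N) y ^ l = 1 := by
      rw [← map_pow]; exact (QuotientGroup.eq_one_iff _).mpr hyl
    have h1 : (QuotientGroup.mk' N) ((x * y) ^ (m * l)) = 1 := by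
      rw [map_pow, map_mul, hc.mul_pow, pow_mul, hx1, one_pow, one_mul, mul_comm m l, pow_mul,
        hy1, one_pow]
    exact (QuotientGroup.eq_one_iff _).mp h1

lemma mem_isoQ {G : Type*} [Group G] {N : Subgroup G} {hN : N.Normal}
    {hab : ∀ x y : G, ⁅x, y⁆ ∈ N} {x : G} :
    x ∈ isoQ N hN hab ↔ ∃ m : ℕ, 0 < m ∧ x ^ m ∈ N := Iff.rfl

/-- relative isolator of `S` in `P`. -/
def iso (P S : Subgroup Γ) (hS : S.Normal) (hab : ∀ x ∈ P, ∀ y ∈ P, ⁅x, y⁆ ∈ S) : Subgroup Γ :=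
  map P.subtype (isoQ (S.subgroupOf P) (hS.subgroupOf P) (fun x y => by
    rw [mem_subgroupOf]
    have : (P.subtype ⁅x, y⁆ : Γ) = ⁅(x : Γ), (y : Γ)⁆ := map_commutatorElement _ _ _
    rw [show ((⁅x, y⁆ : ↥P) : Γ) = P.subtype ⁅x, y⁆ from rfl, this]
    exact hab _ x.2 _ y.2))

lemma mem_iso {P S : Subgroup Γ} {hS : S.Normal} {hab : ∀ x ∈ P, ∀ y ∈ P, ⁅x, y⁆ ∈ S} {x : Γ} :
    x ∈ iso P S hS hab ↔ x ∈ P ∧ ∃ m : ℕ, 0 < m ∧ x ^ m ∈ S := by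
  constructor
  · rintro ⟨y, hy, rfl⟩
    obtain ⟨m, hm, hym⟩ := hy
    refine ⟨y.2, m, hm, ?_⟩
    rw [mem_subgroupOf] at hym
    simpa using hym
  · rintro ⟨hxP, m, hm, hxm⟩
    exact ⟨⟨x, hxP⟩, ⟨m, hm, by rw [mem_subgroupOf]; simpa using hxm⟩, rfl⟩

lemma map_commutator_subtype (H : Subgroup Γ) :
    map H.subtype (_root_.commutator ↥H) = ⁅H, H⁆ := by
  rw [_root_.commutator, Subgroup.map_commutator]
  congr 1 <;> rw [← MonoidHom.range_eq_map, range_subtype]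

/-- the isolated derived subgroup. -/
def tauDer (H : Subgroup Γ) : Subgroup Γ :=
  map H.subtype (isoQ (_root_.commutator ↥H) inferInstance
    (fun x y => commutator_mem_commutator (mem_top x) (mem_top y)))

lemma mem_tauDer {H : Subgroup Γ} {x : Γ} :
    x ∈ tauDer H ↔ x ∈ H ∧ ∃ m : ℕ, 0 < m ∧ x ^ m ∈ ⁅H, H⁆ := by
  constructor
  · rintro ⟨y, ⟨m, hm, hym⟩, rfl⟩
    refine ⟨y.2, m, hm, ?_⟩
    rw [← map_commutator_subtype]
    exact ⟨y ^ m, hym, rfl⟩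
  · rintro ⟨hxP, m, hm, hxm⟩
    refine ⟨⟨x, hxP⟩, ⟨m, hm, ?_⟩, rfl⟩
    rw [← map_commutator_subtype] at hxm
    obtain ⟨z, hz, hzx⟩ := hxm
    have hzz : z = (⟨x, hxP⟩ : ↥H) ^ m := by
      apply Subtype.ext; simpa using hzx
    rwa [← hzz]

lemma commutator_self_le (H : Subgroup Γ) : ⁅H, H⁆ ≤ H := by
  rw [commutator_le]
  intro g1 h1 g2 h2
  rw [commutatorElement_def]
  exact mul_mem (mul_mem (mul_mem h1 h2) (inv_mem h1)) (inv_mem h2)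

lemma tauDer_le (H : Subgroup Γ) : tauDer H ≤ H := fun _ hx => (mem_tauDer.mp hx).1

lemma der_le_tauDer (H : Subgroup Γ) : ⁅H, H⁆ ≤ tauDer H := fun x hx =>
  mem_tauDer.mpr ⟨commutator_self_le H hx, 1, Nat.one_pos, by simpa using hx⟩

lemma tauDer_mono {H K : Subgroup Γ} (h : H ≤ K) : tauDer H ≤ tauDer K := by
  intro x hx
  obtain ⟨hxH, m, hm, hxm⟩ := mem_tauDer.mp hx
  exact mem_tauDer.mpr ⟨h hxH, m, hm, commutator_mono h h hxm⟩

lemma tauDer_normal {H : Subgroup Γ} (hH : H.Normal) : (tauDer H).Normal := by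
  haveI := hH
  constructor
  intro x hx g
  obtain ⟨hxH, m, hm, hxm⟩ := mem_tauDer.mp hx
  refine mem_tauDer.mpr ⟨hH.conj_mem _ hxH g, m, hm, ?_⟩
  rw [conj_pow]
  exact (Subgroup.commutator_normal H H).conj_mem _ hxm g

lemma tauDer_ab {H : Subgroup Γ} {x y : Γ} (hx : x ∈ H) (hy : y ∈ H) : ⁅x, y⁆ ∈ tauDer H :=
  der_le_tauDer H (commutator_mem_commutator hx hy)

lemma tauDer_tf {H : Subgroup Γ} {x : Γ} (hx : x ∈ H) {m : ℕ} (hm : 0 < m)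
    (hxm : x ^ m ∈ tauDer H) : x ∈ tauDer H := by
  obtain ⟨_, l, hl, hxl⟩ := mem_tauDer.mp hxm
  exact mem_tauDer.mpr ⟨hx, m * l, Nat.mul_pos hm hl, by rwa [pow_mul]⟩

/-- A relative series for `H` with abelian torsion-free factors. -/
structure RelSeries' (H : Subgroup Γ) (n : ℕ) where
  s : ℕ → Subgroup Γ
  bot : s 0 = ⊥
  top : s n = H
  stab : ∀ i, n ≤ i → s i = H
  mono : ∀ i, s i ≤ s (i + 1)
  ab : ∀ i, ∀ x ∈ s (i + 1), ∀ y ∈ s (i + 1), ⁅x, y⁆ ∈ s i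
  tf : ∀ i, ∀ x ∈ s (i + 1), ∀ m : ℕ, 0 < m → x ^ m ∈ s i → x ∈ s i

theorem tauDer_iterate_bot : ∀ n : ℕ, ∀ H : Subgroup Γ,
    Nonempty (RelSeries' H n) → tauDer^[n] H = ⊥ := by
  intro n
  induction n with
  | zero =>
    rintro H ⟨S⟩
    simpa using (S.bot ▸ S.top.symm : H = ⊥)
  | succ n ih =>
    rintro H ⟨S⟩
    have hd : tauDer H ≤ S.s n := by
      intro x hx
      obtain ⟨hxH, m, hm, hxm⟩ := mem_tauDer.mp hx
      have h1 : ⁅H, H⁆ ≤ S.s n := by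
        rw [commutator_le]
        intro g1 h1 g2 h2
        exact S.ab n g1 (S.top.symm ▸ h1) g2 (S.top.symm ▸ h2)
      exact S.tf n x (S.top.symm ▸ hxH) m hm (h1 hxm)
    have key : Nonempty (RelSeries' (tauDer H) n) := by
      refine ⟨⟨fun i => S.s (min i n) ⊓ tauDer H, ?_, ?_, ?_, ?_, ?_, ?_⟩⟩
      · simp [S.bot, Nat.min_eq_left (Nat.zero_le n)]
      · simp [inf_eq_right.mpr hd]
      · intro i hi
        show S.s (min i n) ⊓ tauDer H = tauDer H
        rw [Nat.min_eq_right hi]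
        exact inf_eq_right.mpr hd
      · intro i
        exact inf_le_inf_right _ (by
          rcases Nat.lt_or_ge i n with h | h
          · have : min i n = i := Nat.min_eq_left (le_of_lt h)
            have h2 : min (i+1) n = i + 1 := Nat.min_eq_left h
            rw [this, h2]; exact S.mono i
          · rw [Nat.min_eq_right h, Nat.min_eq_right (le_trans h (Nat.le_succ i))])
      · intro i x hx y hy
        have hc2 : ⁅x, y⁆ ∈ tauDer H := by
          rw [commutatorElement_def]
          exact mul_mem (mul_mem (mul_mem hx.2 hy.2) (inv_mem hx.2)) (inv_mem hy.2)
        refine ⟨?_, hc2⟩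
        · rcases Nat.lt_or_ge i n with h | h
          · have e1 : min (i+1) n = i + 1 := Nat.min_eq_left h
            have e2 : min i n = i := Nat.min_eq_left (le_of_lt h)
            rw [e2]
            exact S.ab i x (e1 ▸ hx.1) y (e1 ▸ hy.1)
          · have e1 : min (i+1) n = n := Nat.min_eq_right (le_trans h (Nat.le_succ i))
            have e2 : min i n = n := Nat.min_eq_right h
            rw [e2]
            have hx1 : x ∈ S.s n := by have := hx.1; rwa [e1] at this
            have hy1 : y ∈ S.s n := by have := hy.1; rwa [e1] at this
            exact S.ab n x (S.mono n hx1) y (S.mono n hy1)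
      · intro i x hx m hm hxm
        refine ⟨?_, hx.2⟩
        rcases Nat.lt_or_ge i n with h | h
        · have e1 : min (i+1) n = i + 1 := Nat.min_eq_left h
          have e2 : min i n = i := Nat.min_eq_left (le_of_lt h)
          rw [e2]
          exact S.tf i x (e1 ▸ hx.1) m hm (e2 ▸ hxm.1)
        · have e1 : min (i+1) n = n := Nat.min_eq_right (le_trans h (Nat.le_succ i))
          have hx1 : x ∈ S.s n := by have := hx.1; rwa [e1] at this
          rw [Nat.min_eq_right h]
          exact hx1
    obtain ⟨c⟩ := key
    have := ih (tauDer H) ⟨c⟩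
    rw [Function.iterate_succ_apply]
    exact this



lemma infcyc_eq_one {Q : Type*} [Group Q] [IsCyclic Q] [Infinite Q] {a : Q} {m : ℕ}
    (hm : 0 < m) (ha : a ^ m = 1) : a = 1 := by
  obtain ⟨g, hg⟩ := IsCyclic.exists_generator (α := Q)
  have hnf : ¬ IsOfFinOrder g := by
    intro hf
    have hfin : (Subgroup.zpowers g : Set Q).Finite := hf.finite_zpowers
    have huniv : (Subgroup.zpowers g : Set Q) = Set.univ := by
      ext x; simpa using hg x
    rw [huniv] at hfin
    exact Set.infinite_univ hfin
  obtain ⟨k, hk⟩ := Subgroup.mem_zpowers_iff.mp (hg a)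
  by_cases hk0 : k = 0
  · rw [← hk, hk0, zpow_zero]
  · exfalso
    apply hnf
    rw [isOfFinOrder_iff_pow_eq_one]
    have hkm : k * (m : ℤ) ≠ 0 := mul_ne_zero hk0 (by exact_mod_cast hm.ne')
    refine ⟨(k * (m : ℤ)).natAbs, Int.natAbs_pos.mpr hkm, ?_⟩
    have h1 : g ^ (k * (m : ℤ)) = 1 := by
      rw [zpow_mul, hk, zpow_natCast, ha]
    have h2 : g ^ (((k * (m : ℤ)).natAbs : ℤ)) = 1 := by
      rcases Int.natAbs_eq (k * (m : ℤ)) with h | h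
      · rw [← h]; exact h1
      · rw [h, zpow_neg] at h1
        exact inv_eq_one.mp h1
    rw [← zpow_natCast]
    exact h2

theorem exists_relSeries_top (h : IsStronglyPolycyclic Γ) :
    ∃ n, Nonempty (RelSeries' (⊤ : Subgroup Γ) n) := by
  obtain ⟨n, S, hinf⟩ := h
  set u : ℕ → Subgroup Γ := fun i => ⨅ (j : Fin (n+1)) (_ : i ≤ (j : ℕ)), S.s j with hu
  have mem_u : ∀ {i : ℕ} {x : Γ}, x ∈ u i ↔ ∀ j : Fin (n+1), i ≤ (j : ℕ) → x ∈ S.s j := by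
    intro i x
    rw [hu]
    simp only [Subgroup.mem_iInf]
  have u0 : u 0 = ⊥ := by
    apply le_antisymm _ bot_le
    intro x hx
    have := mem_u.mp hx 0 (by simp)
    rwa [S.bot] at this
  have utop : ∀ i, n ≤ i → u i = ⊤ := by
    intro i hi
    apply le_antisymm le_top
    intro x _
    apply mem_u.mpr
    intro j hj
    have hjn : (j : ℕ) = n := le_antisymm (Nat.lt_succ_iff.mp j.isLt) (le_trans hi hj)
    have : j = Fin.last n := Fin.ext (by simpa using hjn)
    rw [this, S.top]
    exact mem_top x
  have umono : ∀ i, u i ≤ u (i + 1) := by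
    intro i x hx
    exact mem_u.mpr (fun j hj => mem_u.mp hx j (le_trans (Nat.le_succ i) hj))
  have ha1 : ∀ {i : ℕ} (hi : i < n) {x : Γ}, x ∈ u (i+1) → x ∈ S.s (Fin.succ ⟨i, hi⟩) := by
    intro i hi x hx
    exact mem_u.mp hx (Fin.succ ⟨i, hi⟩) (by simp)
  have ha2 : ∀ {i : ℕ} (hi : i < n) {x : Γ}, x ∈ u (i+1) →
      x ∈ S.s (Fin.castSucc ⟨i, hi⟩) → x ∈ u i := by
    intro i hi x hx hx2
    apply mem_u.mpr
    intro j hj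
    rcases Nat.lt_or_ge i (j : ℕ) with h | h
    · exact mem_u.mp hx j h
    · have hje : (j : ℕ) = i := le_antisymm h hj
      have : j = Fin.castSucc ⟨i, hi⟩ := Fin.ext (by simpa using hje)
      rw [this]
      exact hx2
  refine ⟨n, ⟨⟨u, u0, utop n le_rfl, utop, umono, ?_, ?_⟩⟩⟩
  · -- ab
    intro i x hx y hy
    rcases Nat.lt_or_ge i n with hi | hi
    · have hcm : ⁅x, y⁆ ∈ u (i + 1) := by
        rw [commutatorElement_def]
        exact mul_mem (mul_mem (mul_mem hx hy) (inv_mem hx)) (inv_mem hy)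
      refine ha2 hi hcm ?_
      set fi : Fin n := ⟨i, hi⟩
      haveI hN := S.normal fi
      haveI hC : IsCyclic (↥(S.s fi.succ) ⧸ (S.s fi.castSucc).subgroupOf (S.s fi.succ)) :=
        S.cyclic fi
      set x' : ↥(S.s fi.succ) := ⟨x, ha1 hi hx⟩
      set y' : ↥(S.s fi.succ) := ⟨y, ha1 hi hy⟩
      set mkq := QuotientGroup.mk' ((S.s fi.castSucc).subgroupOf (S.s fi.succ)) with hmkq
      obtain ⟨g, hg⟩ := IsCyclic.exists_generator
        (α := ↥(S.s fi.succ) ⧸ (S.s fi.castSucc).subgroupOf (S.s fi.succ))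
      obtain ⟨p, hp⟩ := Subgroup.mem_zpowers_iff.mp (hg (mkq x'))
      obtain ⟨q, hq⟩ := Subgroup.mem_zpowers_iff.mp (hg (mkq y'))
      have hcomm : Commute (mkq x') (mkq y') := by
        rw [← hp, ← hq]
        exact (Commute.refl g).zpow_zpow p q
      have h1 : mkq ⁅x', y'⁆ = 1 := by
        rw [map_commutatorElement]
        exact commutatorElement_eq_one_iff_commute.mpr hcomm
      have h2 : ⁅x', y'⁆ ∈ (S.s fi.castSucc).subgroupOf (S.s fi.succ) :=
        (QuotientGroup.eq_one_iff _).mp h1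
      have h3 : ((⁅x', y'⁆ : ↥(S.s fi.succ)) : Γ) ∈ S.s fi.castSucc := h2
      have h4 : ((⁅x', y'⁆ : ↥(S.s fi.succ)) : Γ) = ⁅x, y⁆ :=
        map_commutatorElement ((S.s fi.succ).subtype) x' y'
      rwa [h4] at h3
    · rw [utop i hi]
      exact mem_top _
  · -- tf
    intro i x hx m hm hxm
    rcases Nat.lt_or_ge i n with hi | hi
    · refine ha2 hi hx ?_
      set fi : Fin n := ⟨i, hi⟩
      haveI hN := S.normal fi
      haveI hC : IsCyclic (↥(S.s fi.succ) ⧸ (S.s fi.castSucc).subgroupOf (S.s fi.succ)) :=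
        S.cyclic fi
      haveI hI : Infinite (↥(S.s fi.succ) ⧸ (S.s fi.castSucc).subgroupOf (S.s fi.succ)) :=
        hinf fi
      set x' : ↥(S.s fi.succ) := ⟨x, ha1 hi hx⟩
      set mkq := QuotientGroup.mk' ((S.s fi.castSucc).subgroupOf (S.s fi.succ)) with hmkq
      have hxm2 : x ^ m ∈ S.s fi.castSucc := mem_u.mp hxm fi.castSucc (le_refl i)
      have h1 : (mkq x') ^ m = 1 := by
        rw [← map_pow]
        apply (QuotientGroup.eq_one_iff _).mpr
        show ((x' ^ m : ↥(S.s fi.succ)) : Γ) ∈ S.s fi.castSucc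
        simpa using hxm2
      have h2 : mkq x' = 1 := infcyc_eq_one hm h1
      have h3 : x' ∈ (S.s fi.castSucc).subgroupOf (S.s fi.succ) :=
        (QuotientGroup.eq_one_iff _).mp h2
      exact h3
    · rw [utop i hi]
      exact mem_top _



section PerStep

variable {P Q Γ₂ M₀ N' : Subgroup Γ}

theorem perstep
    (hPn : P.Normal) (hQn : Q.Normal)
    (hΓ₂n : Γ₂.Normal) (hΓ₂f : Γ₂.FiniteIndex)
    (hab : ∀ x ∈ P, ∀ y ∈ P, ⁅x, y⁆ ∈ Q)
    (htf : ∀ x ∈ P, ∀ m : ℕ, 0 < m → x ^ m ∈ Q → x ∈ Q)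
    (hcent : ∀ x ∈ P, ∀ g ∈ M₀, ⁅x, g⁆ ∈ Q)
    (hconj : ∀ p ∈ Γ₂, ∀ g ∈ N', p * g * p⁻¹ ∈ N')
    (hN'nil : Group.IsNilpotent ↥N')
    (hpow : ∀ g ∈ N', g ^ Γ₂.index ∈ M₀) :
    ∀ g ∈ N', ∀ p ∈ P, ⁅p, g⁆ ∈ Q := by
  haveI := hQn
  obtain ⟨c₀, hc₀⟩ := Subgroup.nilpotent_iff_lowerCentralSeries.mp hN'nil
  set k := Γ₂.index with hkdef
  have hk : 0 < k := Nat.pos_of_ne_zero hΓ₂f.index_ne_zero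
  set mkh : Γ →* Γ ⧸ Q := QuotientGroup.mk' Q with hmkh
  -- the conjugation "action" and its unipotence defect
  set φ : Γ → (Γ ⧸ Q) → (Γ ⧸ Q) := fun g a => mkh g * a * (mkh g)⁻¹ with hφ
  set δ : Γ → (Γ ⧸ Q) → (Γ ⧸ Q) := fun g a => φ g a * a⁻¹ with hδ
  have mkh_eq_one : ∀ {z : Γ}, mkh z = 1 ↔ z ∈ Q := by
    intro z; exact QuotientGroup.eq_one_iff z
  have bridge : ∀ (g p : Γ), δ g (mkh p) = mkh ⁅g, p⁆ := by
    intro g p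
    rw [hδ, hφ]
    rw [commutatorElement_def, map_mul, map_mul, map_mul, map_inv, map_inv]
  have pb_comm : ∀ p ∈ P, ∀ q ∈ P, Commute (mkh p) (mkh q) := by
    intro p hp q hq
    rw [← commutatorElement_eq_one_iff_commute, ← map_commutatorElement]
    exact mkh_eq_one.mpr (hab p hp q hq)
  have delta_mul : ∀ (g : Γ), ∀ p ∈ P, ∀ q ∈ P,
      δ g (mkh (p * q)) = δ g (mkh p) * δ g (mkh q) := by
    intro g p hp q hq
    rw [bridge, bridge, bridge, ← map_mul]
    have hw : ⁅g, q⁆ ∈ P := comm_mem_right hPn hq g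
    have e1 : ⁅g, p * q⁆ = ⁅g, p⁆ * (p * ⁅g, q⁆ * p⁻¹) := by group
    have e2 : mkh (p * ⁅g, q⁆ * p⁻¹) = mkh ⁅g, q⁆ := by
      apply (QuotientGroup.eq ..).mpr
      have e3 : (p * ⁅g, q⁆ * p⁻¹)⁻¹ * ⁅g, q⁆ = ⁅p, ⁅g, q⁆⁻¹⁆ := by group
      rw [e3]
      exact hab p hp _ (inv_mem hw)
    rw [e1, map_mul, e2]
    exact (map_mul mkh _ _).symm
  -- iterated commutators
  set itc : Γ → List Γ → Γ := fun x l => l.foldl (fun y g => ⁅g, y⁆) x with hitc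
  have itc_nil : ∀ x, itc x [] = x := fun _ => rfl
  have itc_cons : ∀ x g l, itc x (g :: l) = itc ⁅g, x⁆ l := fun _ _ _ => rfl
  set dch : List Γ → (Γ ⧸ Q) → (Γ ⧸ Q) := fun l a => l.foldl (fun b g => δ g b) a with hdch
  have dch_nil : ∀ a, dch [] a = a := fun _ => rfl
  have dch_cons : ∀ g l a, dch (g :: l) a = dch l (δ g a) := fun _ _ _ => rfl
  have dch_mk : ∀ (l : List Γ) (x : Γ), dch l (mkh x) = mkh (itc x l) := by
    intro l
    induction l with
    | nil => intro x; rfl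
    | cons g l ih => intro x; rw [dch_cons, itc_cons, bridge, ih]
  have itc_mem_P : ∀ (l : List Γ), ∀ x ∈ P, itc x l ∈ P := by
    intro l
    induction l with
    | nil => intro x hx; exact hx
    | cons g l ih => intro x hx; rw [itc_cons]; exact ih _ (comm_mem_right hPn hx g)
  -- Γ-world unipotence on P ⊓ Γ₂
  set L : ℕ → Subgroup Γ := fun j => map N'.subtype (Subgroup.lowerCentralSeries (⊤ : Subgroup ↥N') j) with hL
  have L0 : L 0 = N' := by
    rw [hL]; simp only [Subgroup.lowerCentralSeries_zero]
    rw [← MonoidHom.range_eq_map, range_subtype]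
  have com1 : ∀ x, x ∈ P → x ∈ Γ₂ → ∀ g ∈ N', ⁅g, x⁆ ∈ (P ⊓ Γ₂) ⊓ L 0 := by
    intro x hxP hx2 g hg
    refine ⟨⟨comm_mem_right hPn hxP g, comm_mem_right hΓ₂n hx2 g⟩, ?_⟩
    rw [L0]
    have e : ⁅g, x⁆ = g * (x * g⁻¹ * x⁻¹) := by group
    rw [e]
    exact mul_mem hg (hconj x hx2 g⁻¹ (inv_mem hg))
  have comStep : ∀ j x, x ∈ (P ⊓ Γ₂) ⊓ L j → ∀ g ∈ N', ⁅g, x⁆ ∈ (P ⊓ Γ₂) ⊓ L (j + 1) := by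
    rintro j x ⟨⟨hxP, hx2⟩, hxL⟩ g hg
    refine ⟨⟨comm_mem_right hPn hxP g, comm_mem_right hΓ₂n hx2 g⟩, ?_⟩
    obtain ⟨x', hx', rfl⟩ := hxL
    have h1 : ⁅(⟨g, hg⟩ : ↥N'), x'⁆ ∈ Subgroup.lowerCentralSeries (⊤ : Subgroup ↥N') (j + 1) := by
      have : Subgroup.lowerCentralSeries (⊤ : Subgroup ↥N') (j + 1) = ⁅Subgroup.lowerCentralSeries (⊤ : Subgroup ↥N') j, ⊤⁆ := rfl
      rw [this, Subgroup.commutator_comm]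
      exact commutator_mem_commutator (mem_top _) hx'
    refine ⟨⁅(⟨g, hg⟩ : ↥N'), x'⁆, h1, ?_⟩
    exact map_commutatorElement (N'.subtype) _ _
  have comAll : ∀ (l : List Γ), (∀ g ∈ l, g ∈ N') → ∀ j, ∀ x, x ∈ (P ⊓ Γ₂) ⊓ L j →
      itc x l ∈ (P ⊓ Γ₂) ⊓ L (j + l.length) := by
    intro l
    induction l with
    | nil => intro _ j x hx; simpa [itc_nil] using hx
    | cons g l ih =>
      intro hl j x hx
      rw [itc_cons]
      have h1 := comStep j x hx g (hl g List.mem_cons_self)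
      have h2 := ih (fun g' hg' => hl g' (List.mem_cons_of_mem g hg')) (j + 1) _ h1
      have e : j + 1 + l.length = j + (g :: l).length := by simp [List.length_cons]; omega
      rwa [e] at h2
  have comFinal : ∀ (l : List Γ), (∀ g ∈ l, g ∈ N') → l.length = c₀ + 1 →
      ∀ x, x ∈ P → x ∈ Γ₂ → itc x l = 1 := by
    intro l hl hlen x hxP hx2
    cases l with
    | nil => simp at hlen
    | cons g l' =>
      rw [itc_cons]
      have h0 := com1 x hxP hx2 g (hl g List.mem_cons_self)
      have h1 := comAll l' (fun g' hg' => hl g' (List.mem_cons_of_mem g hg')) 0 _ h0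
      have hlen' : l'.length = c₀ := by simpa using hlen
      have h2 : itc ⁅g, x⁆ l' ∈ L c₀ := by
        have := h1.2
        rwa [hlen', Nat.zero_add] at this
      have h3 : L c₀ = ⊥ := by
        show map N'.subtype (Subgroup.lowerCentralSeries (⊤ : Subgroup ↥N') c₀) = ⊥
        rw [hc₀, Subgroup.map_bot]
      rw [h3] at h2
      simpa using h2
  -- multiplicativity of dchains on P-images
  have dch_mul : ∀ (l : List Γ), ∀ p ∈ P, ∀ q ∈ P,
      dch l (mkh (p * q)) = dch l (mkh p) * dch l (mkh q) := by
    intro l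
    induction l with
    | nil => intro p _ q _; rw [dch_nil, dch_nil, dch_nil, map_mul]
    | cons g l ih =>
      intro p hp q hq
      rw [dch_cons, dch_cons, dch_cons, delta_mul g p hp q hq, bridge, bridge, ← map_mul]
      exact ih _ (comm_mem_right hPn hp g) _ (comm_mem_right hPn hq g)
  have itc_one : ∀ l : List Γ, itc 1 l = 1 := by
    intro l
    induction l with
    | nil => rfl
    | cons g l ih => rw [itc_cons, commutatorElement_one_right]; exact ih
  have dch_one : ∀ l : List Γ, dch l 1 = 1 := by
    intro l
    have : (1 : Γ ⧸ Q) = mkh 1 := (map_one mkh).symm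
    rw [this, dch_mk, itc_one]
  have dch_pow : ∀ (l : List Γ), ∀ x ∈ P, ∀ j : ℕ,
      dch l (mkh (x ^ j)) = (dch l (mkh x)) ^ j := by
    intro l x hx j
    induction j with
    | zero =>
      rw [pow_zero, pow_zero, map_one, dch_one]
    | succ j ih =>
      rw [pow_succ, pow_succ, dch_mul l _ (pow_mem hx j) _ hx, ih]
  -- unipotence on all of P
  have F2 : ∀ (l : List Γ), (∀ g ∈ l, g ∈ N') → l.length = c₀ + 1 →
      ∀ x ∈ P, dch l (mkh x) = 1 := by
    intro l hl hlen x hx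
    have hxk2 : x ^ k ∈ Γ₂ := by rw [hkdef]; exact Γ₂.pow_index_mem x
    have hz : (dch l (mkh x)) ^ k = 1 := by
      rw [← dch_pow l x hx k, dch_mk, comFinal l hl hlen _ (pow_mem hx k) hxk2, map_one]
    have hw : itc x l ∈ P := itc_mem_P l x hx
    rw [dch_mk] at hz ⊢
    rw [← map_pow] at hz
    have : (itc x l) ^ k ∈ Q := mkh_eq_one.mp hz
    exact mkh_eq_one.mpr (htf _ hw k hk this)
  -- now fix g ∈ N' and run the binomial argument
  intro g hg p hp
  set δn : (Γ ⧸ Q) → (Γ ⧸ Q) := δ g with hδn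
  have dch_replicate : ∀ (j : ℕ) (a : Γ ⧸ Q), dch (List.replicate j g) a = δn^[j] a := by
    intro j
    induction j with
    | zero => intro a; rfl
    | succ j ih =>
      intro a
      rw [List.replicate_succ, dch_cons, Function.iterate_succ_apply]
      exact ih _
  have hiter : ∀ x ∈ P, δn^[c₀ + 1] (mkh x) = 1 := by
    intro x hx
    rw [← dch_replicate]
    exact F2 _ (by intro g' hg'; rw [List.eq_of_mem_replicate hg']; exact hg)
      (by simp) x hx
  have phi_mul : ∀ (y : Γ) (a b : Γ ⧸ Q), φ y (a * b) = φ y a * φ y b := by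
    intro y a b
    rw [hφ]
    simp only []
    group
  have phi_pow_el : ∀ (y : Γ) (j : ℕ) (a : Γ ⧸ Q), φ (y ^ j) a = (φ y)^[j] a := by
    intro y j
    induction j with
    | zero =>
      intro a
      rw [hφ]; simp
    | succ j ih =>
      intro a
      rw [Function.iterate_succ_apply', ← ih]
      rw [hφ]
      simp only [pow_succ, map_mul, map_pow]
      group
  have phi_pow_arg : ∀ (y : Γ) (a : Γ ⧸ Q) (j : ℕ), φ y (a ^ j) = (φ y a) ^ j := by
    intro y a j
    induction j with
    | zero => rw [pow_zero, pow_zero, hφ]; simp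
    | succ j ih => rw [pow_succ, pow_succ, phi_mul, ih]
  have hφk : ∀ x ∈ P, φ (g ^ k) (mkh x) = mkh x := by
    intro x hx
    have h2 : ⁅g ^ k, x⁆ ∈ Q := by
      have h := hcent x hx (g ^ k) (hpow g hg)
      rw [← commutatorElement_inv]
      exact inv_mem h
    have h3 : δ (g ^ k) (mkh x) = 1 := by rw [bridge]; exact mkh_eq_one.mpr h2
    have h4 : φ (g ^ k) (mkh x) * (mkh x)⁻¹ = 1 := h3
    exact mul_inv_eq_one.mp h4
  have sub : ∀ x ∈ P, δn (δn (mkh x)) = 1 → δn (mkh x) = 1 := by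
    intro x hx hdd
    set b := mkh x with hb
    have hdb : δn b = mkh ⁅g, x⁆ := bridge g x
    have hcomm : Commute b (δn b) := by
      rw [hdb, hb]
      exact pb_comm x hx _ (comm_mem_right hPn hx g)
    have hphib : φ g (δn b) = δn b := mul_inv_eq_one.mp hdd
    have hphb : φ g b = b * δn b := by
      have h1 : δn b * b = φ g b := by
        rw [hδn, hδ]
        group
      rw [← h1, hcomm.eq]
    have hbP : ∀ j : ℕ, (φ g)^[j] b = b * (δn b) ^ j := by
      intro j
      induction j with
      | zero => simp
      | succ j ih =>
        rw [Function.iterate_succ_apply', ih, phi_mul, hphb, phi_pow_arg, hphib,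
          pow_succ]
        group
    have hbk : b = b * (δn b) ^ k :=
      ((hφk x hx).symm.trans (phi_pow_el g k b)).trans (hbP k)
    have hz : (δn b) ^ k = 1 := (left_eq_mul.mp hbk)
    rw [hdb, ← map_pow] at hz
    have hq : ⁅g, x⁆ ^ k ∈ Q := mkh_eq_one.mp hz
    have hQmem : ⁅g, x⁆ ∈ Q := htf _ (comm_mem_right hPn hx g) k hk hq
    rw [hdb]
    exact mkh_eq_one.mpr hQmem
  have step : ∀ j : ℕ, 1 ≤ j → (∀ x ∈ P, δn^[j + 1] (mkh x) = 1) →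
      ∀ x ∈ P, δn^[j] (mkh x) = 1 := by
    intro j hj hall x hx
    obtain ⟨j', rfl⟩ : ∃ j', j = j' + 1 := ⟨j - 1, by omega⟩
    set w : Γ := itc x (List.replicate j' g) with hw
    have hwP : w ∈ P := itc_mem_P _ x hx
    have hmkw : δn^[j'] (mkh x) = mkh w := by
      rw [← dch_replicate, dch_mk]
    have hdd : δn (δn (mkh w)) = 1 := by
      have e : δn^[j' + 1 + 1] (mkh x) = δn (δn (δn^[j'] (mkh x))) := by
        rw [Function.iterate_succ_apply', Function.iterate_succ_apply']
      rw [hmkw] at e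
      rw [← e]
      exact hall x hx
    have h1 : δn (mkh w) = 1 := sub w hwP hdd
    rw [Function.iterate_succ_apply', hmkw]
    exact h1
  have down : ∀ t, t ≤ c₀ → ∀ x ∈ P, δn^[c₀ + 1 - t] (mkh x) = 1 := by
    intro t
    induction t with
    | zero => intro _ x hx; simpa using hiter x hx
    | succ t ih =>
      intro ht x hx
      have h1 := ih (by omega)
      have e : c₀ + 1 - t = (c₀ + 1 - (t + 1)) + 1 := by omega
      rw [e] at h1
      exact step _ (by omega) h1 x hx
  have final := down c₀ le_rfl p hp
  have e : c₀ + 1 - c₀ = 1 := by omega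
  rw [e] at final
  have h1 : δn (mkh p) = 1 := by simpa using final
  rw [hδn, bridge] at h1
  have h2 : ⁅g, p⁆ ∈ Q := mkh_eq_one.mp h1
  rw [← commutatorElement_inv]
  exact inv_mem h2

end PerStep



section Chain

variable (M₀ : Subgroup Γ)

/-- iterated isolated derived series of the whole group. -/
def DD : ℕ → Subgroup Γ := fun k => tauDer^[k] (⊤ : Subgroup Γ)

lemma DD_zero : DD (Γ := Γ) 0 = ⊤ := rfl

lemma DD_succ (k : ℕ) : DD (Γ := Γ) (k + 1) = tauDer (DD k) :=
  Function.iterate_succ_apply' _ _ _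

lemma DD_normal : ∀ k, (DD (Γ := Γ) k).Normal := by
  intro k
  induction k with
  | zero => rw [DD_zero]; infer_instance
  | succ k ih => rw [DD_succ]; exact tauDer_normal ih

lemma DD_step_le (k : ℕ) : DD (Γ := Γ) (k + 1) ≤ DD k := by
  rw [DD_succ]; exact tauDer_le _

lemma DD_ab {k : ℕ} {x y : Γ} (hx : x ∈ DD (Γ := Γ) k) (hy : y ∈ DD k) :
    ⁅x, y⁆ ∈ DD (k + 1) := by
  rw [DD_succ]; exact tauDer_ab hx hy

lemma DD_tf {k : ℕ} {x : Γ} {m : ℕ} (hx : x ∈ DD (Γ := Γ) k) (hm : 0 < m)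
    (hxm : x ^ m ∈ DD (k + 1)) : x ∈ DD (k + 1) := by
  rw [DD_succ] at hxm ⊢
  exact tauDer_tf hx hm hxm

/-- refinement of the isolated derived series by commutation with `M₀`. -/
def UU (k : ℕ) : ℕ → Subgroup Γ
  | 0 => DD k
  | j + 1 => ⁅UU k j, M₀⁆ ⊔ DD (k + 1)

variable {M₀}

lemma UU_normal (hM₀n : M₀.Normal) (k : ℕ) : ∀ j, (UU M₀ k j).Normal := by
  intro j
  induction j with
  | zero => exact DD_normal k
  | succ j ih =>
    show (⁅UU M₀ k j, M₀⁆ ⊔ DD (k + 1)).Normal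
    haveI := ih
    haveI := hM₀n
    haveI := DD_normal (Γ := Γ) (k + 1)
    infer_instance

lemma DD1_le_UU (k : ℕ) : ∀ j, DD (k + 1) ≤ UU M₀ k j := by
  intro j
  cases j with
  | zero => exact DD_step_le k
  | succ j => exact le_sup_right

lemma UU_le_DD (hM₀n : M₀.Normal) (k : ℕ) : ∀ j, UU M₀ k j ≤ DD k := by
  intro j
  induction j with
  | zero => exact le_rfl
  | succ j ih =>
    refine sup_le (le_trans ?_ ih) (DD_step_le k)
    haveI := UU_normal hM₀n k j
    exact Subgroup.commutator_le_left _ _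

lemma UU_step_le (hM₀n : M₀.Normal) (k : ℕ) (j : ℕ) : UU M₀ k (j + 1) ≤ UU M₀ k j := by
  refine sup_le ?_ (DD1_le_UU k j)
  haveI := UU_normal hM₀n k j
  exact Subgroup.commutator_le_left _ _

lemma UU_bound (hM₀n : M₀.Normal) (k : ℕ) : ∀ j, UU M₀ k (j + 1) ≤ gam M₀ j ⊔ DD (k + 1) := by
  intro j
  induction j with
  | zero =>
    show ⁅UU M₀ k 0, M₀⁆ ⊔ DD (k + 1) ≤ gam M₀ 0 ⊔ DD (k + 1)
    refine sup_le (le_trans ?_ le_sup_left) le_sup_right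
    haveI := hM₀n
    rw [gam_zero]
    exact Subgroup.commutator_le_right _ _
  | succ j ih =>
    show ⁅UU M₀ k (j + 1), M₀⁆ ⊔ DD (k + 1) ≤ gam M₀ (j + 1) ⊔ DD (k + 1)
    refine sup_le ?_ le_sup_right
    have h1 : ⁅UU M₀ k (j + 1), M₀⁆ ≤ ⁅gam M₀ j ⊔ DD (k + 1), M₀⁆ :=
      Subgroup.commutator_mono ih le_rfl
    refine le_trans h1 ?_
    haveI hn1 : (gam M₀ (j + 1)).Normal := gam_normal hM₀n (j + 1)
    haveI hn2 : (DD (Γ := Γ) (k + 1)).Normal := DD_normal (k + 1)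
    haveI : (gam M₀ (j + 1) ⊔ DD (k + 1)).Normal := by infer_instance
    refine comm_sup_le this ?_ ?_
    · rw [← gam_succ]
      exact le_sup_left
    · refine le_trans ?_ le_sup_right
      haveI := hM₀n
      exact Subgroup.commutator_le_left _ _

/-- the interpolated subgroups: relative isolators of the `UU`. -/
def VV (hM₀n : M₀.Normal) (k j : ℕ) : Subgroup Γ :=
  iso (DD k) (UU M₀ k j) (UU_normal hM₀n k j)
    (fun x hx y hy => DD1_le_UU k j (DD_ab hx hy))

lemma mem_VV (hM₀n : M₀.Normal) {k j : ℕ} {x : Γ} :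
    x ∈ VV hM₀n k j ↔ x ∈ DD k ∧ ∃ m : ℕ, 0 < m ∧ x ^ m ∈ UU M₀ k j := mem_iso

lemma VV_zero (hM₀n : M₀.Normal) (k : ℕ) : VV hM₀n k 0 = DD k := by
  ext x
  rw [mem_VV hM₀n]
  constructor
  · rintro ⟨hx, _⟩; exact hx
  · intro hx; exact ⟨hx, 1, Nat.one_pos, by simpa [UU] using hx⟩

lemma VV_last (hM₀n : M₀.Normal) {k c : ℕ} (hc : gam M₀ c = ⊥) : VV hM₀n k (c + 1) = DD (k + 1) := by
  ext x
  rw [mem_VV hM₀n]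
  constructor
  · rintro ⟨hx, m, hm, hxm⟩
    have h1 : UU M₀ k (c + 1) ≤ DD (k + 1) := by
      refine le_trans (UU_bound hM₀n k c) ?_
      rw [hc]
      simp
    exact DD_tf hx hm (h1 hxm)
  · intro hx
    exact ⟨DD_step_le k hx, 1, Nat.one_pos, by simpa using DD1_le_UU k (c + 1) hx⟩

lemma DD1_le_VV (hM₀n : M₀.Normal) (k j : ℕ) : DD (k + 1) ≤ VV hM₀n k j := by
  intro x hx
  rw [mem_VV hM₀n]
  exact ⟨DD_step_le k hx, 1, Nat.one_pos, by simpa using DD1_le_UU k j hx⟩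

lemma VV_le_DD (hM₀n : M₀.Normal) (k j : ℕ) : VV hM₀n k j ≤ DD k := fun _ hx => ((mem_VV hM₀n).mp hx).1

lemma VV_step_le (hM₀n : M₀.Normal) (k j : ℕ) : VV hM₀n k (j + 1) ≤ VV hM₀n k j := by
  intro x hx
  rw [mem_VV hM₀n] at hx ⊢
  obtain ⟨hxD, m, hm, hxm⟩ := hx
  exact ⟨hxD, m, hm, UU_step_le hM₀n k j hxm⟩

lemma VV_normal (hM₀n : M₀.Normal) (k j : ℕ) : (VV hM₀n k j).Normal := by
  constructor
  intro x hx g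
  rw [mem_VV hM₀n] at hx ⊢
  obtain ⟨hxD, m, hm, hxm⟩ := hx
  refine ⟨(DD_normal k).conj_mem _ hxD g, m, hm, ?_⟩
  rw [conj_pow]
  exact (UU_normal hM₀n k j).conj_mem _ hxm g

lemma VV_ab (hM₀n : M₀.Normal) {k j : ℕ} {x y : Γ} (hx : x ∈ VV hM₀n k j) (hy : y ∈ VV hM₀n k j) :
    ⁅x, y⁆ ∈ VV hM₀n k (j + 1) :=
  DD1_le_VV hM₀n k (j + 1) (DD_ab (VV_le_DD hM₀n k j hx) (VV_le_DD hM₀n k j hy))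

lemma VV_tf (hM₀n : M₀.Normal) {k j : ℕ} {x : Γ} {m : ℕ} (hx : x ∈ VV hM₀n k j) (hm : 0 < m)
    (hxm : x ^ m ∈ VV hM₀n k (j + 1)) : x ∈ VV hM₀n k (j + 1) := by
  rw [mem_VV hM₀n] at hx hxm ⊢
  obtain ⟨hxD, _⟩ := hx
  obtain ⟨_, l, hl, hxl⟩ := hxm
  exact ⟨hxD, m * l, Nat.mul_pos hm hl, by rwa [pow_mul]⟩

lemma VV_cent (hM₀n : M₀.Normal) {k j : ℕ} {x g : Γ} (hx : x ∈ VV hM₀n k j) (hg : g ∈ M₀) :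
    ⁅x, g⁆ ∈ VV hM₀n k (j + 1) := by
  have hxD : x ∈ DD k := VV_le_DD hM₀n k j hx
  obtain ⟨_, m, hm, hxm⟩ := (mem_VV hM₀n).mp hx
  haveI hDn : (DD (Γ := Γ) (k + 1)).Normal := DD_normal (k + 1)
  set mkD : Γ →* Γ ⧸ DD (Γ := Γ) (k + 1) := QuotientGroup.mk' (DD (k + 1)) with hmkD
  -- ⁅x, g⁆ ^ m ≡ ⁅x ^ m, g⁆  mod DD (k+1)
  have key : ∀ l : ℕ, mkD (⁅x, g⁆ ^ l) = mkD ⁅x ^ l, g⁆ := by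
    intro l
    induction l with
    | zero => simp
    | succ l ih =>
      have e1 : ⁅x ^ (l + 1), g⁆ = (x * ⁅x ^ l, g⁆ * x⁻¹) * ⁅x, g⁆ := by
        rw [pow_succ']; group
      have hw : ⁅x ^ l, g⁆ ∈ DD k := comm_mem_left (DD_normal k) (pow_mem hxD l) g
      have e2 : mkD (x * ⁅x ^ l, g⁆ * x⁻¹) = mkD ⁅x ^ l, g⁆ := by
        apply (QuotientGroup.eq ..).mpr
        have e3 : (x * ⁅x ^ l, g⁆ * x⁻¹)⁻¹ * ⁅x ^ l, g⁆ = ⁅x, ⁅x ^ l, g⁆⁻¹⁆ := by group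
        rw [e3]
        exact DD_ab hxD (inv_mem hw)
      have e4 : mkD ((x * ⁅x ^ l, g⁆ * x⁻¹) * ⁅x, g⁆)
          = mkD (x * ⁅x ^ l, g⁆ * x⁻¹) * mkD ⁅x, g⁆ := map_mul _ _ _
      rw [e1, e4, e2, pow_succ, map_mul, ih]
  have hu : ⁅x ^ m, g⁆ ∈ UU M₀ k (j + 1) := by
    have : ⁅x ^ m, g⁆ ∈ ⁅UU M₀ k j, M₀⁆ := commutator_mem_commutator hxm hg
    exact le_sup_left (α := Subgroup Γ) this
  have hmk : mkD (⁅x, g⁆ ^ m) = mkD ⁅x ^ m, g⁆ := key m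
  have hpow : ⁅x, g⁆ ^ m ∈ UU M₀ k (j + 1) := by
    have h1 : (⁅x ^ m, g⁆)⁻¹ * ⁅x, g⁆ ^ m ∈ DD (k + 1) := by
      have := (QuotientGroup.eq ..).mp hmk.symm
      exact this
    have h2 : ⁅x, g⁆ ^ m = ⁅x ^ m, g⁆ * ((⁅x ^ m, g⁆)⁻¹ * ⁅x, g⁆ ^ m) := by group
    rw [h2]
    exact mul_mem hu (DD1_le_UU k (j + 1) h1)
  rw [mem_VV hM₀n]
  exact ⟨comm_mem_left (DD_normal k) hxD g, m, hm, hpow⟩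

end Chain



/-- conjugate subgroup. -/
def cj (γ : Γ) (X : Subgroup Γ) : Subgroup Γ := Subgroup.map (MulAut.conj γ).toMonoidHom X

lemma mem_cj {γ : Γ} {X : Subgroup Γ} {x : Γ} :
    x ∈ cj γ X ↔ ∃ y ∈ X, γ * y * γ⁻¹ = x := by
  constructor
  · rintro ⟨y, hy, rfl⟩
    exact ⟨y, hy, rfl⟩
  · rintro ⟨y, hy, rfl⟩
    exact ⟨y, hy, rfl⟩

lemma cj_cj (γ γ' : Γ) (X : Subgroup Γ) : cj γ (cj γ' X) = cj (γ * γ') X := by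
  rw [cj, cj, cj, Subgroup.map_map]
  congr 1
  ext x
  show γ * (γ' * x * γ'⁻¹) * γ⁻¹ = (γ * γ') * x * (γ * γ')⁻¹
  group

lemma cj_one (X : Subgroup Γ) : cj 1 X = X := by
  ext x
  rw [mem_cj]
  constructor
  · rintro ⟨y, hy, rfl⟩; simpa using hy
  · intro hx; exact ⟨x, hx, by group⟩

lemma cj_eq_self {X T : Subgroup Γ} (hXT : X ≤ T) {c : Γ} (hc : c ∈ T)
    (hXn : ∀ t ∈ T, ∀ x ∈ X, t * x * t⁻¹ ∈ X) : cj c X = X := by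
  apply le_antisymm
  · rintro x ⟨y, hy, rfl⟩
    exact hXn c hc y hy
  · intro x hx
    rw [mem_cj]
    exact ⟨c⁻¹ * x * c, by
      have := hXn c⁻¹ (inv_mem hc) x hx
      simpa using this, by group⟩

lemma cj_nilpotent {X : Subgroup Γ} (h : Group.IsNilpotent ↥X) (γ : Γ) :
    Group.IsNilpotent ↥(cj γ X) :=
  nilpotent_of_mulEquiv
    (X.equivMapOfInjective (MulAut.conj γ).toMonoidHom (MulAut.conj γ).injective)

lemma bot_nilpotent : Group.IsNilpotent ↥(⊥ : Subgroup Γ) := by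
  haveI : Subsingleton ↥(⊥ : Subgroup Γ) := by
    constructor
    intro a b
    apply Subtype.ext
    rw [Subgroup.mem_bot.mp a.2, Subgroup.mem_bot.mp b.2]
  infer_instance

/-- finite joins of normal nilpotent subgroups are nilpotent. -/
lemma fitting_finset {ι : Type*} (s : Finset ι) (f : ι → Subgroup Γ)
    (hn : ∀ i, (f i).Normal) (hnil : ∀ i, Group.IsNilpotent ↥(f i)) :
    (⨆ i ∈ s, f i).Normal ∧ Group.IsNilpotent ↥(⨆ i ∈ s, f i) := by
  classical
  induction s using Finset.induction_on with
  | empty =>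
    have e : (⨆ i ∈ (∅ : Finset ι), f i) = ⊥ := by simp
    rw [e]
    exact ⟨by infer_instance, bot_nilpotent⟩
  | @insert a s ha ih =>
    rw [Finset.iSup_insert]
    haveI h1 := ih.1
    haveI h2 := hn a
    refine ⟨by infer_instance, ?_⟩
    exact fitting_sup _ _ h2 ih.1 (hnil a) ih.2

lemma fitting_iSup {ι : Type*} [Finite ι] (f : ι → Subgroup Γ)
    (hn : ∀ i, (f i).Normal) (hnil : ∀ i, Group.IsNilpotent ↥(f i)) :
    (⨆ i, f i).Normal ∧ Group.IsNilpotent ↥(⨆ i, f i) := by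
  haveI : Fintype ι := Fintype.ofFinite ι
  have e : (⨆ i, f i) = ⨆ i ∈ Finset.univ, f i := by simp
  rw [e]
  exact fitting_finset Finset.univ f hn hnil

/-- Construction of a normal nilpotent subgroup of `Γ` containing `X`,
given `X ≤ Γ₂` normalized by the normal finite-index subgroup `Γ₂`. -/
lemma exists_M₀ (Γ₂ X : Subgroup Γ) (hΓ₂n : Γ₂.Normal) (hΓ₂f : Γ₂.FiniteIndex)
    (hXle : X ≤ Γ₂) (hXn : ∀ t ∈ Γ₂, ∀ x ∈ X, t * x * t⁻¹ ∈ X)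
    (hXnil : Group.IsNilpotent ↥X) :
    ∃ M₀ : Subgroup Γ, M₀.Normal ∧ Group.IsNilpotent ↥M₀ ∧ X ≤ M₀ := by
  haveI := hΓ₂n
  haveI := hΓ₂f
  set F : Γ → Subgroup Γ := fun γ => cj γ X with hF
  have hFle : ∀ γ, F γ ≤ Γ₂ := by
    rintro γ x ⟨y, hy, rfl⟩
    exact hΓ₂n.conj_mem _ (hXle hy) γ
  have hFcoset : ∀ γ c, c ∈ Γ₂ → F (γ * c) = F γ := by
    intro γ c hc
    rw [hF]
    show cj (γ * c) X = cj γ X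
    rw [← cj_cj, cj_eq_self hXle hc hXn]
  have hFrep : ∀ γ : Γ, F γ = F (QuotientGroup.mk γ : Γ ⧸ Γ₂).out := by
    intro γ
    have h1 : (QuotientGroup.mk ((QuotientGroup.mk γ : Γ ⧸ Γ₂).out) : Γ ⧸ Γ₂)
        = QuotientGroup.mk γ := QuotientGroup.out_eq' _
    have h2 : ((QuotientGroup.mk γ : Γ ⧸ Γ₂).out)⁻¹ * γ ∈ Γ₂ :=
      (QuotientGroup.eq (s := Γ₂) ..).mp h1
    have h4 := hFcoset ((QuotientGroup.mk γ : Γ ⧸ Γ₂).out) _ h2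
    have h5 : (QuotientGroup.mk γ : Γ ⧸ Γ₂).out * (((QuotientGroup.mk γ : Γ ⧸ Γ₂).out)⁻¹ * γ)
        = γ := by group
    rw [h5] at h4
    exact h4
  have hFnormalΓ₂ : ∀ γ, ∀ t ∈ Γ₂, ∀ x ∈ F γ, t * x * t⁻¹ ∈ F γ := by
    rintro γ t ht x ⟨y, hy, rfl⟩
    rw [hF]
    show t * (γ * y * γ⁻¹) * t⁻¹ ∈ cj γ X
    rw [mem_cj]
    refine ⟨γ⁻¹ * t * γ * y * (γ⁻¹ * t * γ)⁻¹, ?_, by group⟩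
    exact hXn _ (by
      have : γ⁻¹ * t * γ ∈ Γ₂ := by
        have := hΓ₂n.conj_mem t ht γ⁻¹
        simpa [mul_assoc] using this
      exact this) y hy
  have hFnil : ∀ γ, Group.IsNilpotent ↥(F γ) := fun γ => cj_nilpotent hXnil γ
  -- the join over coset representatives, inside Γ₂
  set M₂ : Subgroup ↥Γ₂ := ⨆ q : Γ ⧸ Γ₂, ((F q.out).subgroupOf Γ₂) with hM₂
  have hM₂nil : Group.IsNilpotent ↥M₂ := by
    refine (fitting_iSup _ ?_ ?_).2
    · intro q
      constructor
      rintro ⟨x, hx2⟩ hmem ⟨t, ht2⟩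
      rw [mem_subgroupOf] at hmem ⊢
      exact hFnormalΓ₂ _ t ht2 x hmem
    · intro q
      exact nilpotent_of_mulEquiv (subgroupOfEquivOfLe (hFle q.out)).symm (_h := hFnil q.out)
  set M₀ : Subgroup Γ := Subgroup.map Γ₂.subtype M₂ with hM₀
  have hM₀eq : M₀ = ⨆ q : Γ ⧸ Γ₂, F q.out := by
    rw [hM₀, hM₂, Subgroup.map_iSup]
    congr 1
    funext q
    rw [subgroupOf_map_subtype, inf_eq_left.mpr (hFle q.out)]
  have hFleM₀ : ∀ γ, F γ ≤ M₀ := by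
    intro γ
    rw [hM₀eq, hFrep γ]
    exact le_iSup (fun q : Γ ⧸ Γ₂ => F q.out) (QuotientGroup.mk γ)
  refine ⟨M₀, ?_, ?_, ?_⟩
  · constructor
    intro x hx g
    rw [hM₀eq] at hx
    refine Subgroup.iSup_induction _ (C := fun y => g * y * g⁻¹ ∈ M₀) hx ?_ ?_ ?_
    · intro q y hy
      have h1 : g * y * g⁻¹ ∈ cj g (F q.out) := mem_cj.mpr ⟨y, hy, rfl⟩
      have h2 : cj g (F q.out) = F (g * q.out) := cj_cj g q.out X
      rw [h2] at h1
      exact hFleM₀ _ h1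
    · simpa using M₀.one_mem
    · intro a b ha hb
      have e : g * (a * b) * g⁻¹ = (g * a * g⁻¹) * (g * b * g⁻¹) := by group
      rw [e]
      exact mul_mem ha hb
  · exact nilpotent_of_mulEquiv (M₂.equivMapOfInjective Γ₂.subtype Γ₂.subtype_injective)
      (_h := hM₂nil)
  · have := hFleM₀ 1
    rw [hF] at this
    simp only [cj_one] at this
    exact this



lemma nilpotent_of_le {A B : Subgroup Γ} (hAB : A ≤ B) (hB : Group.IsNilpotent ↥B) :
    Group.IsNilpotent ↥A := by
  haveI := hB
  exact nilpotent_of_mulEquiv (subgroupOfEquivOfLe hAB) (_h := Subgroup.isNilpotent _)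

theorem key (hΓ : IsStronglyPolycyclic Γ) (Γ₁ : Subgroup Γ) (hfi : Γ₁.FiniteIndex)
    (N : Subgroup ↥Γ₁) (hNn : N.Normal) (hNnil : Group.IsNilpotent ↥N) :
    Subgroup.map Γ₁.subtype N ≤ Fitting Γ := by
  haveI := hfi
  set N' : Subgroup Γ := Subgroup.map Γ₁.subtype N with hN'
  have hconj1 : ∀ p ∈ Γ₁, ∀ g ∈ N', p * g * p⁻¹ ∈ N' := by
    rintro p hp g ⟨gg, hgg, rfl⟩
    exact ⟨(⟨p, hp⟩ : ↥Γ₁) * gg * (⟨p, hp⟩ : ↥Γ₁)⁻¹, hNn.conj_mem gg hgg _, rfl⟩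
  have hN'nil : Group.IsNilpotent ↥N' :=
    nilpotent_of_mulEquiv (N.equivMapOfInjective Γ₁.subtype Γ₁.subtype_injective) (_h := hNnil)
  set Γ₂ : Subgroup Γ := Γ₁.normalCore with hΓ₂
  have hΓ₂n : Γ₂.Normal := Subgroup.normalCore_normal Γ₁
  haveI : Γ₂.Normal := hΓ₂n
  have hΓ₂f : Γ₂.FiniteIndex := Subgroup.finiteIndex_normalCore Γ₁
  haveI := hΓ₂f
  set X : Subgroup Γ := N' ⊓ Γ₂ with hX
  have hXle : X ≤ Γ₂ := inf_le_right
  have hXn : ∀ t ∈ Γ₂, ∀ x ∈ X, t * x * t⁻¹ ∈ X := fun t ht x hx =>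
    ⟨hconj1 t (Γ₁.normalCore_le ht) x hx.1, hΓ₂n.conj_mem x hx.2 t⟩
  have hXnil : Group.IsNilpotent ↥X := nilpotent_of_le inf_le_left hN'nil
  obtain ⟨M₀, hM₀n, hM₀nil, hXM⟩ := exists_M₀ Γ₂ X hΓ₂n hΓ₂f hXle hXn hXnil
  have hpow : ∀ g ∈ N', g ^ Γ₂.index ∈ M₀ := fun g hg =>
    hXM ⟨pow_mem hg _, Γ₂.pow_index_mem g⟩
  obtain ⟨r, hRS⟩ := exists_relSeries_top hΓ
  have hDr : DD (Γ := Γ) r = ⊥ := tauDer_iterate_bot r ⊤ hRS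
  obtain ⟨c₁, hc₁⟩ := exists_gam_bot hM₀nil
  set c : ℕ := c₁ + 1 with hc
  have hcpos : 0 < c := Nat.succ_pos c₁
  set E : ℕ → Subgroup Γ := fun i => VV hM₀n (i / c) (i % c) with hE
  have hE0 : E 0 = ⊤ := by
    show VV hM₀n (0 / c) (0 % c) = ⊤
    rw [Nat.zero_div, Nat.zero_mod, VV_zero, DD_zero]
  have hEbot : E (r * c) = ⊥ := by
    show VV hM₀n (r * c / c) (r * c % c) = ⊥
    rw [Nat.mul_div_cancel r hcpos, Nat.mul_mod_left, VV_zero, hDr]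
  have hEsucc : ∀ i, E (i + 1) = VV hM₀n (i / c) (i % c + 1) := by
    intro i
    set k := i / c with hk
    set j := i % c with hj0
    have hj : j < c := Nat.mod_lt i hcpos
    have hdm : c * k + j = i := Nat.div_add_mod i c
    rcases Nat.lt_or_ge (j + 1) c with h | h
    · have h1 : (i + 1) / c = k ∧ (i + 1) % c = j + 1 :=
        (Nat.div_mod_unique hcpos).mpr ⟨by omega, h⟩
      show VV hM₀n ((i + 1) / c) ((i + 1) % c) = VV hM₀n k (j + 1)
      rw [h1.1, h1.2]
    · have hjc : j + 1 = c := by omega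
      have hmul : c * (k + 1) = c * k + c := by ring
      have h1 : (i + 1) / c = k + 1 ∧ (i + 1) % c = 0 :=
        (Nat.div_mod_unique hcpos).mpr ⟨by omega, hcpos⟩
      show VV hM₀n ((i + 1) / c) ((i + 1) % c) = VV hM₀n k (j + 1)
      rw [h1.1, h1.2, VV_zero, hjc, hc]
      exact (VV_last hM₀n hc₁).symm
  have hEnormal : ∀ i, (E i).Normal := fun i => VV_normal hM₀n _ _
  have hEab : ∀ i, ∀ x ∈ E i, ∀ y ∈ E i, ⁅x, y⁆ ∈ E (i + 1) := by
    intro i x hx y hy; rw [hEsucc i]; exact VV_ab hM₀n hx hy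
  have hEtf : ∀ i, ∀ x ∈ E i, ∀ m : ℕ, 0 < m → x ^ m ∈ E (i + 1) → x ∈ E (i + 1) := by
    intro i x hx m hm hxm
    rw [hEsucc i] at hxm ⊢
    exact VV_tf hM₀n hx hm hxm
  have hEcent : ∀ i, ∀ x ∈ E i, ∀ g ∈ M₀, ⁅x, g⁆ ∈ E (i + 1) := by
    intro i x hx g hg; rw [hEsucc i]; exact VV_cent hM₀n hx hg
  set F : Subgroup Γ :=
    { carrier := {g : Γ | ∀ i, ∀ x ∈ E i, ⁅x, g⁆ ∈ E (i + 1)}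
      one_mem' := by
        intro i x hx
        rw [commutatorElement_one_right]
        exact (E (i + 1)).one_mem
      mul_mem' := by
        intro g h hg hh i x hx
        have e : ⁅x, g * h⁆ = ⁅x, g⁆ * (g * ⁅x, h⁆ * g⁻¹) := by group
        rw [e]
        exact mul_mem (hg i x hx) ((hEnormal (i + 1)).conj_mem _ (hh i x hx) g)
      inv_mem' := by
        intro g hg i x hx
        have e : ⁅x, g⁻¹⁆ = g⁻¹ * ⁅x, g⁆⁻¹ * g := by group
        rw [e]
        have := (hEnormal (i + 1)).conj_mem _ (inv_mem (hg i x hx)) g⁻¹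
        simpa using this } with hFdef
  have mem_F : ∀ {g : Γ}, g ∈ F ↔ ∀ i, ∀ x ∈ E i, ⁅x, g⁆ ∈ E (i + 1) := fun {g} => Iff.rfl
  have hFnormal : F.Normal := by
    constructor
    intro f hf γ
    rw [mem_F]
    intro i x hx
    have e : ⁅x, γ * f * γ⁻¹⁆ = γ * ⁅γ⁻¹ * x * γ, f⁆ * γ⁻¹ := by group
    rw [e]
    refine (hEnormal (i + 1)).conj_mem _ ?_ γ
    refine (mem_F.mp hf) i _ ?_
    have := (hEnormal i).conj_mem x hx γ⁻¹
    simpa using this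
  have hFnil : Group.IsNilpotent ↥F := by
    rw [Subgroup.nilpotent_iff_finite_descending_central_series]
    refine ⟨r * c, fun m => (E m).subgroupOf F, ⟨?_, ?_⟩, ?_⟩
    · show (E 0).subgroupOf F = ⊤
      rw [hE0]; exact top_subgroupOf _
    · intro x n hx g
      have hx' : (x : Γ) ∈ E n := hx
      have hgF : (g : Γ) ∈ F := g.2
      have h1 : ⁅(x : Γ), (g : Γ)⁆ ∈ E (n + 1) := (mem_F.mp hgF) n _ hx'
      show ((x * g * x⁻¹ * g⁻¹ : ↥F) : Γ) ∈ E (n + 1)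
      push_cast
      exact h1
    · show (E (r * c)).subgroupOf F = ⊥
      rw [hEbot]; exact bot_subgroupOf _
  have hFfit : F ≤ Fitting Γ := by
    rw [Fitting]
    exact le_iSup_of_le F (le_iSup_of_le ⟨hFnormal, hFnil⟩ le_rfl)
  refine le_trans ?_ hFfit
  intro g hg
  rw [mem_F]
  intro i x hx
  exact perstep (hEnormal i) (hEnormal (i + 1)) hΓ₂n hΓ₂f (hEab i) (hEtf i) (hEcent i)
    (fun p hp => hconj1 p (Γ₁.normalCore_le hp)) hN'nil hpow g hg x hx


end PolyFitAux

/-- If `Γ` is strongly polycyclic and `Γ₁ ≤ Γ` has finite index, then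
`Fitt(Γ₁) = Fitt(Γ) ∩ Γ₁`. -/
theorem fitting_of_finiteIndex (Γ : Type*) [Group Γ]
    (hΓ : IsStronglyPolycyclic Γ) (Γ₁ : Subgroup Γ) (hΓ₁ : Γ₁.FiniteIndex) :
    Subgroup.map Γ₁.subtype (Fitting ↥Γ₁) = Fitting Γ ⊓ Γ₁ := by
  apply le_antisymm
  · refine le_inf ?_ (Subgroup.map_subtype_le _)
    have e : Fitting ↥Γ₁ = ⨆ (N : Subgroup ↥Γ₁) (_ : N.Normal ∧ Group.IsNilpotent ↥N), N :=
      rfl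
    rw [Subgroup.map_le_iff_le_comap, e]
    refine iSup_le fun N => iSup_le fun hN => ?_
    rw [← Subgroup.map_le_iff_le_comap]
    exact PolyFitAux.key hΓ Γ₁ hΓ₁ N hN.1 hN.2
  · intro x hx
    obtain ⟨hxF, hx1⟩ := hx
    have hdir : Directed (· ≤ ·)
        (fun p : {N : Subgroup Γ // N.Normal ∧ Group.IsNilpotent ↥N} => (p : Subgroup Γ)) := by
      rintro ⟨A, hAn, hAnil⟩ ⟨B, hBn, hBnil⟩
      haveI := hAn; haveI := hBn
      exact ⟨⟨A ⊔ B, by infer_instance, PolyFitAux.fitting_sup A B hAn hBn hAnil hBnil⟩,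
        le_sup_left, le_sup_right⟩
    haveI hne : Nonempty {N : Subgroup Γ // N.Normal ∧ Group.IsNilpotent ↥N} :=
      ⟨⟨⊥, by infer_instance, PolyFitAux.bot_nilpotent⟩⟩
    have heq : Fitting Γ = ⨆ p : {N : Subgroup Γ // N.Normal ∧ Group.IsNilpotent ↥N},
        (p : Subgroup Γ) := by
      rw [Fitting]
      exact iSup_subtype'
    rw [heq] at hxF
    obtain ⟨⟨M, hMn, hMnil⟩, hxM⟩ := (Subgroup.mem_iSup_of_directed hdir).mp hxF
    have h1 : (M.subgroupOf Γ₁).Normal := hMn.subgroupOf Γ₁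
    have h2 : Group.IsNilpotent ↥(M.subgroupOf Γ₁) := by
      have hminf : Group.IsNilpotent ↥(M ⊓ Γ₁) := PolyFitAux.nilpotent_of_le inf_le_left hMnil
      have e : Subgroup.map Γ₁.subtype (M.subgroupOf Γ₁) = M ⊓ Γ₁ :=
        Subgroup.subgroupOf_map_subtype M Γ₁
      have h4 : Group.IsNilpotent ↥(Subgroup.map Γ₁.subtype (M.subgroupOf Γ₁)) := by
        rw [e]; exact hminf
      exact nilpotent_of_mulEquiv
        ((M.subgroupOf Γ₁).equivMapOfInjective Γ₁.subtype Γ₁.subtype_injective).symm (_h := h4)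
    have h3 : M.subgroupOf Γ₁ ≤ Fitting ↥Γ₁ := by
      rw [Fitting]
      exact le_iSup_of_le (M.subgroupOf Γ₁) (le_iSup_of_le ⟨h1, h2⟩ le_rfl)
    have hy : (⟨x, hx1⟩ : ↥Γ₁) ∈ M.subgroupOf Γ₁ := Subgroup.mem_subgroupOf.mpr hxM
    exact ⟨⟨x, hx1⟩, h3 hy, rfl⟩
end

section
/- Let P be a group acting linearly on a finite-dimensional real vector space V, preserving a lattice L' ⊆ V (a finitely generated ℤ-submodule spanning V), with the action on V irreducible and nontrivial. Then the set of v ∈ V such that v − p·v ∈ L' for all p ∈ P is contained in a lattice L ⊆ V; equivalently, the fixed-point set of the induced P-action on the torus V/L' is finite. -/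
private lemma fg_of_le_fg' {R M : Type*} [Ring R] [IsNoetherianRing R] [AddCommGroup M]
    [Module R M] {N M' : Submodule R M} (hM : M'.FG) (h : N ≤ M') : N.FG := by
  haveI : IsNoetherian R M' := isNoetherian_of_fg_of_noetherian M' hM
  have : Submodule.map M'.subtype (Submodule.comap M'.subtype N) = N := by
    rw [Submodule.map_comap_subtype, inf_eq_right.2 h]
  rw [← this]
  exact (IsNoetherian.noetherian _).map _

/-- Let `P` act linearly, irreducibly and nontrivially on a finite-dimensional
real vector space `V`, preserving a vector space lattice `L'` (a finitely
generated `ℤ`-submodule spanning `V`).  Then every `v ∈ V` with `v - p • v ∈ L'`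
for all `p ∈ P` lies in a fixed vector space lattice `L`. -/
theorem lattice_fixed_points (P : Type*) [Group P]
    (V : Type*) [AddCommGroup V] [Module ℝ V] [FiniteDimensional ℝ V]
    (ρ : P →* (V ≃ₗ[ℝ] V))
    (L' : AddSubgroup V) (hfg : L'.FG)
    (hspan : Submodule.span ℝ (L' : Set V) = ⊤)
    (hpres : ∀ (p : P), ∀ x ∈ L', ρ p x ∈ L')
    (hirr : ∀ W : Submodule ℝ V, (∀ (p : P), ∀ x ∈ W, ρ p x ∈ W) → W = ⊥ ∨ W = ⊤)
    (hnontriv : ∃ (p : P) (x : V), ρ p x ≠ x) :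
    ∃ L : AddSubgroup V, L.FG ∧ Submodule.span ℝ (L : Set V) = ⊤ ∧
      ∀ v : V, (∀ p : P, v - ρ p v ∈ L') → v ∈ L := by
  classical
  set K : P → Submodule ℝ V := fun p => LinearMap.ker ((1 : V →ₗ[ℝ] V) - (ρ p : V →ₗ[ℝ] V))
    with hK
  have hKmem : ∀ p x, x ∈ K p ↔ ρ p x = x := by
    intro p x
    rw [hK]
    simp only [LinearMap.mem_ker, LinearMap.sub_apply, Module.End.one_apply, sub_eq_zero]
    exact eq_comm
  -- the fixed subspace is trivial
  have hinv : ∀ (q : P), ∀ x ∈ ⨅ p, K p, ρ q x ∈ ⨅ p, K p := by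
    intro q x hx
    have hx' : ∀ p, ρ p x = x := fun p => (hKmem p x).1 ((Submodule.mem_iInf _).1 hx p)
    refine (Submodule.mem_iInf _).2 fun p => (hKmem p _).2 ?_
    rw [hx' q, hx' p]
  have hbot : (⨅ p, K p) = ⊥ := by
    rcases hirr (⨅ p, K p) hinv with h | h
    · exact h
    · exfalso
      obtain ⟨p, x, hx⟩ := hnontriv
      have hx' : x ∈ ⨅ p, K p := h ▸ Submodule.mem_top
      exact hx ((hKmem p x).1 ((Submodule.mem_iInf _).1 hx' p))
  -- finite subfamily with trivial intersection
  obtain ⟨m, ⟨s₀, hs₀⟩, hmin⟩ :=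
    IsArtinian.set_has_minimal (R := ℝ) (M := V) (Set.range fun s : Finset P => s.inf K)
      ⟨⊤, ∅, rfl⟩
  have hm : m = ⊥ := by
    have hle : ∀ q, m ≤ K q := by
      intro q
      have h1 : (insert q s₀).inf K ∈ Set.range fun s : Finset P => s.inf K := ⟨_, rfl⟩
      have h2 : (insert q s₀).inf K ≤ m := by
        rw [← hs₀, Finset.inf_insert]; exact inf_le_right
      have h3 : ¬(insert q s₀).inf K < m := hmin _ h1
      have h4 : (insert q s₀).inf K = m := (lt_or_eq_of_le h2).resolve_left h3
      calc m = (insert q s₀).inf K := h4.symm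
        _ ≤ K q := by rw [Finset.inf_insert]; exact inf_le_left
    rw [← le_bot_iff, ← hbot]
    exact le_iInf hle
  -- the injective map
  set T : V →ₗ[ℝ] (↥s₀ → V) :=
    LinearMap.pi fun i : ↥s₀ => (1 : V →ₗ[ℝ] V) - (ρ (i : P) : V →ₗ[ℝ] V) with hT
  have hkerT : LinearMap.ker T = ⊥ := by
    rw [hT, LinearMap.ker_pi]
    have : (⨅ i : ↥s₀, K (i : P)) = s₀.inf K := by
      rw [Finset.inf_eq_iInf, iInf_subtype]
    have hs₀' : s₀.inf K = m := hs₀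
    rw [show (⨅ i : ↥s₀, LinearMap.ker ((1 : V →ₗ[ℝ] V) - (ρ (i : P) : V →ₗ[ℝ] V)))
        = ⨅ i : ↥s₀, K (i : P) from rfl, this, hs₀', hm]
  -- the fixed-point subgroup as a ℤ-submodule
  set F : Submodule ℤ V :=
    { carrier := {v | ∀ p : P, v - ρ p v ∈ L'}
      add_mem' := by
        intro a b ha hb p
        have : a + b - ρ p (a + b) = (a - ρ p a) + (b - ρ p b) := by
          rw [map_add]; abel
        rw [this]; exact add_mem (ha p) (hb p)
      zero_mem' := by intro p; simpa using L'.zero_mem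
      smul_mem' := by
        intro n v hv p
        have : n • v - ρ p (n • v) = n • (v - ρ p v) := by
          rw [map_zsmul, smul_sub]
        rw [this]; exact zsmul_mem (hv p) n } with hF
  set Tℤ : V →ₗ[ℤ] (↥s₀ → V) := T.restrictScalars ℤ with hTℤ
  have hfgℤ : (AddSubgroup.toIntSubmodule L').FG := by
    rw [Submodule.fg_iff_addSubgroup_fg, AddSubgroup.toIntSubmodule_toAddSubgroup]
    exact hfg
  have hmaple : F.map Tℤ ≤ Submodule.pi Set.univ fun _ : ↥s₀ => AddSubgroup.toIntSubmodule L' := by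
    rintro _ ⟨v, hv, rfl⟩
    intro i _
    exact hv (i : P)
  have hmapfg : (F.map Tℤ).FG :=
    fg_of_le_fg' (Submodule.fg_pi fun _ => hfgℤ) hmaple
  have hFfg : F.FG := by
    refine Submodule.fg_of_fg_map_of_fg_inf_ker Tℤ hmapfg ?_
    have : LinearMap.ker Tℤ = ⊥ := by
      rw [hTℤ, LinearMap.ker_restrictScalars, hkerT, Submodule.restrictScalars_bot]
    rw [this, inf_bot_eq]
    exact Submodule.fg_bot
  refine ⟨(AddSubgroup.toIntSubmodule L' ⊔ F).toAddSubgroup, ?_, ?_, ?_⟩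
  · rw [← Submodule.fg_iff_addSubgroup_fg]
    exact hfgℤ.sup hFfg
  · rw [eq_top_iff, ← hspan]
    apply Submodule.span_mono
    intro x hx
    exact (Submodule.mem_toAddSubgroup _).mpr
      ((le_sup_left : AddSubgroup.toIntSubmodule L' ≤ _)
        (hx : x ∈ AddSubgroup.toIntSubmodule L'))
  · intro v hv
    exact (Submodule.mem_toAddSubgroup _).mpr ((le_sup_right : F ≤ _) (hv : v ∈ F))
end
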